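/- arXiv:1908.03172 — 2 statements merged into one kernel-verified Lean document; each statement's English description precedes it below -/
import Mathlib

section
/- Let G be a minimally non-(3,4)-colorable graph with girth at least 5, and let u_1 u_2 u_3 u_4 u_5 u_6 be a 6-cycle in G such that u_1, u_3, u_5 have degree 2 and u_2, u_4, u_6 are 6p-vertices. Then there do not exist vertices v_1 and v_2, distinct from each other and from u_1, ..., u_6, such that u_2 v_1, v_1 v_2, and v_2 u_6 are edges of G (so that u_6 u_1 u_2 v_1 v_2 is a 5-cycle) and at least one of v_1, v_2 has degree 2. -/
/-- The degree of a vertex: the number of its neighbors. -/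
noncomputable def degN {V : Type*} (G : SimpleGraph V) (v : V) : ℕ :=
  {w | G.Adj v w}.ncard

/-- `c` is a (3,4)-coloring of `G`: every vertex gets value 3 or 4, and every
vertex with value `i` has at most `i` neighbors with value `i`. -/
def IsColoring34 {V : Type*} (G : SimpleGraph V) (c : V → ℕ) : Prop :=
  (∀ v, c v = 3 ∨ c v = 4) ∧ ∀ v, {w | G.Adj v w ∧ c w = c v}.ncard ≤ c v

/-- `G` is (3,4)-colorable. -/
def Colorable34 {V : Type*} (G : SimpleGraph V) : Prop :=
  ∃ c, IsColoring34 G c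

/-- The graph `G − v` obtained by deleting the vertex `v` and its incident edges
(keeping `v` as an isolated vertex, which does not affect (3,4)-colorability). -/
def deleteVert {V : Type*} (G : SimpleGraph V) (v : V) : SimpleGraph V where
  Adj a b := G.Adj a b ∧ a ≠ v ∧ b ≠ v
  symm := ⟨fun _ _ ⟨h, ha, hb⟩ => ⟨h.symm, hb, ha⟩⟩
  loopless := ⟨fun a ⟨h, _, _⟩ => G.loopless.irrefl a h⟩

/-- `G` is minimally non-(3,4)-colorable. -/
def MinNonColorable34 {V : Type*} (G : SimpleGraph V) : Prop :=
  ¬ Colorable34 G ∧ (∀ v, Colorable34 (deleteVert G v)) ∧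
    ∀ e ∈ G.edgeSet, Colorable34 (G.deleteEdges {e})

/-- `u` is `i`-saturated under the coloring `c` of the graph `G`. -/
def Saturated34 {V : Type*} (G : SimpleGraph V) (c : V → ℕ) (i : ℕ) (u : V) : Prop :=
  c u = i ∧ {w | G.Adj u w ∧ c w = i}.ncard = i

/-- `u` can be recolored: changing the color of `u` to the other color
(`7 - c u` swaps 3 and 4) again yields a (3,4)-coloring of `G`. -/
def Recolorable34 {V : Type*} [DecidableEq V] (G : SimpleGraph V) (c : V → ℕ) (u : V) : Prop :=
  IsColoring34 G (Function.update c u (7 - c u))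

/-- The number of 3^+-neighbors of `x` in `G` (neighbors of degree at least 3). -/
noncomputable def tpn {V : Type*} (G : SimpleGraph V) (x : V) : ℕ :=
  {w | G.Adj x w ∧ 3 ≤ degN G w}.ncard

/-- A 5p-vertex (poor 5-vertex): degree 5 with exactly one 3^+-neighbor. -/
def Is5p {V : Type*} (G : SimpleGraph V) (x : V) : Prop := degN G x = 5 ∧ tpn G x = 1

/-- A 5s-vertex (semi-poor 5-vertex): degree 5 with exactly two 3^+-neighbors. -/
def Is5s {V : Type*} (G : SimpleGraph V) (x : V) : Prop := degN G x = 5 ∧ tpn G x = 2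

/-- A 6p-vertex (poor 6-vertex): degree 6 with exactly one 3^+-neighbor. -/
def Is6p {V : Type*} (G : SimpleGraph V) (x : V) : Prop := degN G x = 6 ∧ tpn G x = 1

/-- `G` has girth at least 5: no 3-cycles and no 4-cycles. -/
def GirthAtLeast5 {V : Type*} (G : SimpleGraph V) : Prop :=
  (∀ a b c : V, G.Adj a b → G.Adj b c → ¬ G.Adj c a) ∧
  (∀ a b c d : V, a ≠ c → b ≠ d →
    G.Adj a b → G.Adj b c → G.Adj c d → ¬ G.Adj d a)

section Helpers

variable {V : Type*} [Fintype V]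

/-- The number of neighbors of `v` in `G` colored `i`. -/
noncomputable def cnt (G : SimpleGraph V) (c : V → ℕ) (v : V) (i : ℕ) : ℕ :=
  {w | G.Adj v w ∧ c w = i}.ncard

lemma cnt_le_degN (G : SimpleGraph V) (c : V → ℕ) (v : V) (i : ℕ) :
    cnt G c v i ≤ degN G v :=
  Set.ncard_le_ncard (fun w hw => hw.1)

lemma cntH_le_degN (G : SimpleGraph V) (u1 : V) (c : V → ℕ) (v : V) (i : ℕ) :
    cnt (deleteVert G u1) c v i ≤ degN G v :=
  Set.ncard_le_ncard (fun w hw => hw.1.1)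

lemma nbr2 (G : SimpleGraph V) {v x y : V} (hd : degN G v = 2)
    (hx : G.Adj v x) (hy : G.Adj v y) (hxy : x ≠ y) :
    ∀ w, G.Adj v w → w = x ∨ w = y := by
  have hsub : ({x, y} : Set V) ⊆ {w | G.Adj v w} := by
    intro w hw
    rcases hw with rfl | hw
    · exact hx
    · rw [Set.mem_singleton_iff] at hw; subst hw; exact hy
  have hle : {w | G.Adj v w}.ncard ≤ ({x, y} : Set V).ncard := by
    rw [Set.ncard_pair hxy]
    exact le_of_eq hd
  have heq := Set.eq_of_subset_of_ncard_le hsub hle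
  intro w hw
  have : w ∈ ({x, y} : Set V) := heq ▸ hw
  simpa using this

lemma cnt_drop (G : SimpleGraph V) {u1 v : V} {c c' : V → ℕ} {i : ℕ}
    (hvu : v ≠ u1) (hu1 : ¬ G.Adj v u1 ∨ c' u1 ≠ i)
    (hag : ∀ w, G.Adj v w → w ≠ u1 → c' w = i → c w = i) :
    cnt G c' v i ≤ cnt (deleteVert G u1) c v i := by
  refine Set.ncard_le_ncard ?_ (Set.toFinite _)
  rintro w ⟨haw, hcw⟩
  have hwu : w ≠ u1 := by
    rintro rfl
    rcases hu1 with h | h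
    · exact h haw
    · exact h hcw
  exact ⟨⟨haw, hvu, hwu⟩, hag w haw hwu hcw⟩

lemma cnt_enter_u1 (G : SimpleGraph V) {u1 v : V} {c c' : V → ℕ} {i : ℕ}
    (hvu : v ≠ u1) (hau : G.Adj v u1) (hc'u : c' u1 = i)
    (hag : ∀ w, G.Adj v w → w ≠ u1 → (c' w = i ↔ c w = i)) :
    cnt G c' v i = cnt (deleteVert G u1) c v i + 1 := by
  have hset : {w | G.Adj v w ∧ c' w = i}
      = insert u1 {w | (deleteVert G u1).Adj v w ∧ c w = i} := by
    ext w
    simp only [Set.mem_insert_iff, Set.mem_setOf_eq]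
    constructor
    · rintro ⟨haw, hcw⟩
      by_cases hwu : w = u1
      · exact Or.inl hwu
      · exact Or.inr ⟨⟨haw, hvu, hwu⟩, (hag w haw hwu).mp hcw⟩
    · rintro (rfl | ⟨⟨haw, _, hwu⟩, hcw⟩)
      · exact ⟨hau, hc'u⟩
      · exact ⟨haw, (hag w haw hwu).mpr hcw⟩
  unfold cnt
  rw [hset, Set.ncard_insert_of_notMem]
  rintro ⟨⟨_, _, h⟩, _⟩
  exact h rfl

lemma cnt_enter (G : SimpleGraph V) {u1 x v : V} {c c' : V → ℕ} {i : ℕ}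
    (hvu : v ≠ u1) (hxu : x ≠ u1) (hax : G.Adj v x)
    (hcx : c x ≠ i) (hc'x : c' x = i)
    (hu1 : ¬ G.Adj v u1 ∨ c' u1 ≠ i)
    (hag : ∀ w, G.Adj v w → w ≠ x → w ≠ u1 → (c' w = i ↔ c w = i)) :
    cnt G c' v i = cnt (deleteVert G u1) c v i + 1 := by
  have hset : {w | G.Adj v w ∧ c' w = i}
      = insert x {w | (deleteVert G u1).Adj v w ∧ c w = i} := by
    ext w
    simp only [Set.mem_insert_iff, Set.mem_setOf_eq]
    constructor
    · rintro ⟨haw, hcw⟩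
      by_cases hwx : w = x
      · exact Or.inl hwx
      · have hwu : w ≠ u1 := by
          rintro rfl
          rcases hu1 with h | h
          · exact h haw
          · exact h hcw
        exact Or.inr ⟨⟨haw, hvu, hwu⟩, (hag w haw hwx hwu).mp hcw⟩
    · rintro (rfl | ⟨⟨haw, _, hwu⟩, hcw⟩)
      · exact ⟨hax, hc'x⟩
      · have hwx : w ≠ x := by rintro rfl; exact hcx hcw
        exact ⟨haw, (hag w haw hwx hwu).mpr hcw⟩
  unfold cnt
  rw [hset, Set.ncard_insert_of_notMem]
  rintro ⟨_, hcw⟩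
  exact hcx hcw

lemma cnt_exch (G : SimpleGraph V) {u1 x v : V} {c c' : V → ℕ} {i : ℕ}
    (hvu : v ≠ u1) (hxu : x ≠ u1) (hax : G.Adj v x) (hau : G.Adj v u1)
    (hcx : c x = i) (hc'x : c' x ≠ i) (hc'u : c' u1 = i)
    (hag : ∀ w, G.Adj v w → w ≠ x → w ≠ u1 → (c' w = i ↔ c w = i)) :
    cnt G c' v i = cnt (deleteVert G u1) c v i := by
  have hset : {w | G.Adj v w ∧ c' w = i}
      = insert u1 ({w | (deleteVert G u1).Adj v w ∧ c w = i} \ {x}) := by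
    ext w
    simp only [Set.mem_insert_iff, Set.mem_diff, Set.mem_setOf_eq, Set.mem_singleton_iff]
    constructor
    · rintro ⟨haw, hcw⟩
      by_cases hwu : w = u1
      · exact Or.inl hwu
      · have hwx : w ≠ x := by rintro rfl; exact hc'x hcw
        exact Or.inr ⟨⟨⟨haw, hvu, hwu⟩, (hag w haw hwx hwu).mp hcw⟩, hwx⟩
    · rintro (rfl | ⟨⟨⟨haw, _, hwu⟩, hcw⟩, hwx⟩)
      · exact ⟨hau, hc'u⟩
      · exact ⟨haw, (hag w haw hwx hwu).mpr hcw⟩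
  unfold cnt
  rw [hset, Set.ncard_insert_of_notMem]
  · exact Set.ncard_diff_singleton_add_one ⟨⟨hax, hvu, hxu⟩, hcx⟩
  · rintro ⟨⟨⟨_, _, h⟩, _⟩, _⟩
    exact h rfl

lemma cnt_part (H : SimpleGraph V) (c : V → ℕ) (hall : ∀ w, c w = 3 ∨ c w = 4) (v : V) :
    cnt H c v 3 + cnt H c v 4 = {w | H.Adj v w}.ncard := by
  unfold cnt
  rw [← Set.ncard_union_eq]
  · congr 1
    ext w
    simp only [Set.mem_union, Set.mem_setOf_eq]
    constructor
    · rintro (⟨h, _⟩ | ⟨h, _⟩) <;> exact h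
    · intro h
      rcases hall w with h3 | h4
      · exact Or.inl ⟨h, h3⟩
      · exact Or.inr ⟨h, h4⟩
  · rw [Set.disjoint_left]
    rintro w ⟨_, h3⟩ ⟨_, h4⟩
    omega

lemma Hnbr_card (G : SimpleGraph V) {u1 v : V} (hvu : v ≠ u1) (hadj : G.Adj v u1) :
    {w | (deleteVert G u1).Adj v w}.ncard = degN G v - 1 := by
  have hset : {w | (deleteVert G u1).Adj v w} = {w | G.Adj v w} \ {u1} := by
    ext w
    simp only [Set.mem_diff, Set.mem_setOf_eq, Set.mem_singleton_iff]
    exact ⟨fun ⟨h, _, h2⟩ => ⟨h, h2⟩, fun ⟨h, h2⟩ => ⟨h, hvu, h2⟩⟩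
  have hm : u1 ∈ {w | G.Adj v w} := hadj
  rw [hset, Set.ncard_diff_singleton_of_mem hm]
  rfl

lemma validG_of (G : SimpleGraph V) {u1 u2 u6 : V}
    (ch1 : ∀ w, G.Adj u1 w → w = u2 ∨ w = u6)
    (c' : V → ℕ) (hcol : ∀ v, c' v = 3 ∨ c' v = 4)
    (h : ∀ v, v ≠ u1 → cnt G c' v (c' v) ≤ c' v) :
    IsColoring34 G c' := by
  refine ⟨hcol, fun v => ?_⟩
  by_cases hv : v = u1
  · subst hv
    have hsub : {w | G.Adj v w ∧ c' w = c' v} ⊆ ({u2, u6} : Set V) := by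
      rintro w ⟨haw, _⟩
      rcases ch1 w haw with rfl | rfl
      · exact Set.mem_insert _ _
      · exact Set.mem_insert_of_mem _ rfl
    have h2 : ({u2, u6} : Set V).ncard ≤ 2 := by
      apply le_trans (Set.ncard_insert_le _ _)
      simp
    have := le_trans (Set.ncard_le_ncard hsub) h2
    rcases hcol v with hv | hv <;> omega
  · exact h v hv

end Helpers

section Helpers2

variable {V : Type*} [Fintype V]

lemma deg2_ok (G : SimpleGraph V) (c' : V → ℕ) (v : V) (hd : degN G v ≤ 2)
    (hc : c' v = 3 ∨ c' v = 4) : cnt G c' v (c' v) ≤ c' v :=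
  le_trans (cnt_le_degN G c' v _) (by omega)

variable [DecidableEq V]

lemma upd2_at_u1 (c : V → ℕ) (x u1 : V) (n m : ℕ) :
    Function.update (Function.update c x n) u1 m u1 = m :=
  Function.update_self _ _ _

lemma upd2_at_x (c : V → ℕ) {x u1 : V} (n m : ℕ) (hxu : x ≠ u1) :
    Function.update (Function.update c x n) u1 m x = n := by
  rw [Function.update_of_ne hxu, Function.update_self]

lemma upd2_other (c : V → ℕ) {x u1 w : V} (n m : ℕ) (hwx : w ≠ x) (hwu : w ≠ u1) :
    Function.update (Function.update c x n) u1 m w = c w := by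
  rw [Function.update_of_ne hwu, Function.update_of_ne hwx]

lemma upd2_colors (c : V → ℕ) (hc : ∀ v, c v = 3 ∨ c v = 4) (x u1 : V) (n m : ℕ)
    (hn : n = 3 ∨ n = 4) (hm : m = 3 ∨ m = 4) :
    ∀ v, Function.update (Function.update c x n) u1 m v = 3 ∨
      Function.update (Function.update c x n) u1 m v = 4 := by
  intro v
  rcases eq_or_ne v u1 with rfl | h1
  · rw [Function.update_self]; exact hm
  · rw [Function.update_of_ne h1]
    rcases eq_or_ne v x with rfl | hx
    · rw [Function.update_self]; exact hn
    · rw [Function.update_of_ne hx]; exact hc v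

lemma upd1_colors (c : V → ℕ) (hc : ∀ v, c v = 3 ∨ c v = 4) (u1 : V) (m : ℕ)
    (hm : m = 3 ∨ m = 4) :
    ∀ v, Function.update c u1 m v = 3 ∨ Function.update c u1 m v = 4 := by
  intro v
  rcases eq_or_ne v u1 with rfl | h1
  · rw [Function.update_self]; exact hm
  · rw [Function.update_of_ne h1]; exact hc v

end Helpers2

section Key

lemma key {V : Type*} [Fintype V] (G : SimpleGraph V)
    (hG : MinNonColorable34 G) (hgirth : GirthAtLeast5 G)
    (u1 u2 u3 u4 u5 u6 v1 v2 : V)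
    (ne12 : u1 ≠ u2) (ne13 : u1 ≠ u3) (ne14 : u1 ≠ u4) (ne15 : u1 ≠ u5) (ne16 : u1 ≠ u6)
    (ne23 : u2 ≠ u3) (ne24 : u2 ≠ u4) (ne25 : u2 ≠ u5) (ne26 : u2 ≠ u6)
    (ne34 : u3 ≠ u4) (ne35 : u3 ≠ u5) (ne36 : u3 ≠ u6)
    (ne45 : u4 ≠ u5) (ne46 : u4 ≠ u6) (ne56 : u5 ≠ u6)
    (hv1u1 : v1 ≠ u1) (hv1u2 : v1 ≠ u2) (hv1u3 : v1 ≠ u3) (hv1u4 : v1 ≠ u4)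
    (hv1u5 : v1 ≠ u5) (hv1u6 : v1 ≠ u6)
    (hv2u1 : v2 ≠ u1) (hv2u2 : v2 ≠ u2) (hv2u3 : v2 ≠ u3) (hv2u4 : v2 ≠ u4)
    (hv2u5 : v2 ≠ u5) (hv2u6 : v2 ≠ u6)
    (hv1v2 : v1 ≠ v2)
    (a12 : G.Adj u1 u2) (a23 : G.Adj u2 u3) (a34 : G.Adj u3 u4)
    (a45 : G.Adj u4 u5) (a56 : G.Adj u5 u6) (a61 : G.Adj u6 u1)
    (d1 : degN G u1 = 2) (d3 : degN G u3 = 2) (d5 : degN G u5 = 2)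
    (p2 : Is6p G u2) (p6 : Is6p G u6)
    (a2v1 : G.Adj u2 v1) (av12 : G.Adj v1 v2) (av26 : G.Adj v2 u6)
    (dv1 : degN G v1 = 2) : False := by
  classical
  obtain ⟨hnc, hdel, -⟩ := hG
  obtain ⟨c, hcol, hval0⟩ := hdel u1
  have hval : ∀ v, cnt (deleteVert G u1) c v (c v) ≤ c v := hval0
  have a21 : G.Adj u2 u1 := a12.symm
  have a16 : G.Adj u1 u6 := a61.symm
  have a32 : G.Adj u3 u2 := a23.symm
  have a43 : G.Adj u4 u3 := a34.symm
  have a65 : G.Adj u6 u5 := a56.symm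
  have a54 : G.Adj u5 u4 := a45.symm
  have av1u2 : G.Adj v1 u2 := a2v1.symm
  have a6v2 : G.Adj u6 v2 := av26.symm
  have av21 : G.Adj v2 v1 := av12.symm
  have na26 : ¬ G.Adj u2 u6 := hgirth.1 u6 u1 u2 a61 a12
  have na6v1 : ¬ G.Adj v1 u6 := hgirth.1 u6 v2 v1 a6v2 av21
  have nav2u2 : ¬ G.Adj v2 u2 := hgirth.1 u2 v1 v2 a2v1 av12
  have na36 : ¬ G.Adj u3 u6 := hgirth.2 u6 u1 u2 u3 (Ne.symm ne26) ne13 a61 a12 a23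
  have na52 : ¬ G.Adj u5 u2 := hgirth.2 u2 u1 u6 u5 ne26 ne15 a21 a16 a65
  have ch1 : ∀ w, G.Adj u1 w → w = u2 ∨ w = u6 := nbr2 G d1 a12 a16 ne26
  have ch3 : ∀ w, G.Adj u3 w → w = u2 ∨ w = u4 := nbr2 G d3 a32 a34 ne24
  have ch5 : ∀ w, G.Adj u5 w → w = u4 ∨ w = u6 := nbr2 G d5 a54 a56 ne46
  have chv1 : ∀ w, G.Adj v1 w → w = u2 ∨ w = v2 := nbr2 G dv1 av1u2 av12 (Ne.symm hv2u2)
  have hnadj1 : ∀ v, v ≠ u2 → v ≠ u6 → ¬ G.Adj v u1 := by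
    intro v h2 h6 ha
    rcases ch1 v ha.symm with rfl | rfl
    · exact h2 rfl
    · exact h6 rfl
  have P2 : cnt (deleteVert G u1) c u2 3 + cnt (deleteVert G u1) c u2 4 = 5 := by
    rw [cnt_part (deleteVert G u1) c hcol u2, Hnbr_card G (Ne.symm ne12) a21, p2.1]
  have P6 : cnt (deleteVert G u1) c u6 3 + cnt (deleteVert G u1) c u6 4 = 5 := by
    rw [cnt_part (deleteVert G u1) c hcol u6, Hnbr_card G (Ne.symm ne16) a61, p6.1]
  -- Step 1: the two neighbors of u1 have different colors
  have hne : c u2 ≠ c u6 := by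
    intro hceq
    apply hnc
    refine ⟨Function.update c u1 (7 - c u2),
      validG_of G ch1 _ (upd1_colors c hcol u1 _ (by rcases hcol u2 with h | h <;> omega)) ?_⟩
    intro v hv
    rw [Function.update_of_ne hv]
    have hag : ∀ w, G.Adj v w → w ≠ u1 → Function.update c u1 (7 - c u2) w = c v → c w = c v := by
      intro w _ hwu hcw; rwa [Function.update_of_ne hwu] at hcw
    by_cases h2 : u2 = v
    · subst h2
      refine le_trans (cnt_drop G hv (Or.inr ?_) hag) (hval u2)
      rw [Function.update_self]
      rcases hcol u2 with h | h <;> omega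
    · by_cases h6 : u6 = v
      · subst h6
        refine le_trans (cnt_drop G hv (Or.inr ?_) hag) (hval u6)
        rw [Function.update_self, ← hceq]
        rcases hcol u2 with h | h <;> omega
      · exact le_trans (cnt_drop G hv (Or.inl (hnadj1 v (Ne.symm h2) (Ne.symm h6))) hag) (hval v)
  -- Step 2: u2 and u6 are saturated
  have sat2 : cnt (deleteVert G u1) c u2 (c u2) = c u2 := by
    by_contra hs
    have hs' : cnt (deleteVert G u1) c u2 (c u2) + 1 ≤ c u2 := by
      have := hval u2; omega
    apply hnc
    refine ⟨Function.update c u1 (c u2),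
      validG_of G ch1 _ (upd1_colors c hcol u1 _ (hcol u2)) ?_⟩
    intro v hv
    rw [Function.update_of_ne hv]
    have hag : ∀ w, G.Adj v w → w ≠ u1 → Function.update c u1 (c u2) w = c v → c w = c v := by
      intro w _ hwu hcw; rwa [Function.update_of_ne hwu] at hcw
    have hagiff : ∀ w, G.Adj u2 w → w ≠ u1 →
        (Function.update c u1 (c u2) w = c u2 ↔ c w = c u2) := by
      intro w _ hwu; rw [Function.update_of_ne hwu]
    by_cases h2 : u2 = v
    · subst h2
      rw [cnt_enter_u1 G hv a21 (Function.update_self _ _ _) hagiff]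
      exact hs'
    · by_cases h6 : u6 = v
      · subst h6
        refine le_trans (cnt_drop G hv (Or.inr ?_) hag) (hval u6)
        rw [Function.update_self]; exact hne
      · exact le_trans (cnt_drop G hv (Or.inl (hnadj1 v (Ne.symm h2) (Ne.symm h6))) hag) (hval v)
  have sat6 : cnt (deleteVert G u1) c u6 (c u6) = c u6 := by
    by_contra hs
    have hs' : cnt (deleteVert G u1) c u6 (c u6) + 1 ≤ c u6 := by
      have := hval u6; omega
    apply hnc
    refine ⟨Function.update c u1 (c u6),
      validG_of G ch1 _ (upd1_colors c hcol u1 _ (hcol u6)) ?_⟩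
    intro v hv
    rw [Function.update_of_ne hv]
    have hag : ∀ w, G.Adj v w → w ≠ u1 → Function.update c u1 (c u6) w = c v → c w = c v := by
      intro w _ hwu hcw; rwa [Function.update_of_ne hwu] at hcw
    have hagiff : ∀ w, G.Adj u6 w → w ≠ u1 →
        (Function.update c u1 (c u6) w = c u6 ↔ c w = c u6) := by
      intro w _ hwu; rw [Function.update_of_ne hwu]
    by_cases h6 : u6 = v
    · subst h6
      rw [cnt_enter_u1 G hv a61 (Function.update_self _ _ _) hagiff]
      exact hs'
    · by_cases h2 : u2 = v
      · subst h2
        refine le_trans (cnt_drop G hv (Or.inr ?_) hag) (hval u2)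
        rw [Function.update_self]; exact Ne.symm hne
      · exact le_trans (cnt_drop G hv (Or.inl (hnadj1 v (Ne.symm h2) (Ne.symm h6))) hag) (hval v)
  -- Step 3: existence of s', the saturated (c u2)-colored neighbor of u6
  have hs'ex : ∃ s', G.Adj u6 s' ∧ s' ≠ u1 ∧ c s' = c u2 ∧
      c u2 ≤ cnt (deleteVert G u1) c s' (c u2) := by
    by_contra hno
    push_neg at hno
    apply hnc
    refine ⟨Function.update (Function.update c u6 (c u2)) u1 (c u6),
      validG_of G ch1 _ (upd2_colors c hcol u6 u1 _ _ (hcol u2) (hcol u6)) ?_⟩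
    intro v hv
    by_cases h6 : u6 = v
    · subst h6
      rw [upd2_at_x c _ _ (Ne.symm ne16)]
      have hagg : ∀ w, G.Adj u6 w → w ≠ u1 →
          Function.update (Function.update c u6 (c u2)) u1 (c u6) w = c u2 → c w = c u2 := by
        intro w haw hwu hcw
        rwa [upd2_other c _ _ haw.ne' hwu] at hcw
      refine le_trans (cnt_drop G hv (Or.inr ?_) hagg) ?_
      · rw [upd2_at_u1]; exact Ne.symm hne
      · have s6 := sat6
        have hne' := hne
        rcases hcol u2 with h2 | h2 <;> rcases hcol u6 with h6' | h6' <;>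
          rw [h2, h6'] at hne' <;> rw [h6'] at s6 <;> rw [h2] <;> omega
    · by_cases h2 : u2 = v
      · subst h2
        rw [upd2_other c _ _ ne26 hv]
        have hagg : ∀ w, G.Adj u2 w → w ≠ u1 →
            Function.update (Function.update c u6 (c u2)) u1 (c u6) w = c u2 → c w = c u2 := by
          intro w haw hwu hcw
          have hw6 : w ≠ u6 := by rintro rfl; exact na26 haw
          rwa [upd2_other c _ _ hw6 hwu] at hcw
        refine le_trans (cnt_drop G hv (Or.inr ?_) hagg) (hval u2)
        rw [upd2_at_u1]; exact Ne.symm hne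
      · rw [upd2_other c _ _ (Ne.symm h6) hv]
        by_cases hadj6 : G.Adj v u6
        · by_cases hcv : c v = c u2
          · rw [hcv]
            rw [cnt_enter G hv (Ne.symm ne16) hadj6 (Ne.symm hne)
              (upd2_at_x c _ _ (Ne.symm ne16)) (Or.inl (hnadj1 v (Ne.symm h2) (Ne.symm h6)))
              (fun w hw hwx hwu => by rw [upd2_other c _ _ hwx hwu])]
            have := hno v hadj6.symm hv hcv
            omega
          · refine le_trans (cnt_drop G hv (Or.inl (hnadj1 v (Ne.symm h2) (Ne.symm h6))) ?_) (hval v)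
            intro w haw hwu hcw
            by_cases hw6 : w = u6
            · rw [hw6, upd2_at_x c _ _ (Ne.symm ne16)] at hcw
              exact absurd hcw.symm hcv
            · rwa [upd2_other c _ _ hw6 hwu] at hcw
        · refine le_trans (cnt_drop G hv (Or.inl (hnadj1 v (Ne.symm h2) (Ne.symm h6))) ?_) (hval v)
          intro w haw hwu hcw
          have hw6 : w ≠ u6 := by rintro rfl; exact hadj6 haw
          rwa [upd2_other c _ _ hw6 hwu] at hcw
  obtain ⟨s', hs'adj, hs'ne, hs'col, hs'sat⟩ := hs'ex
  have degs' : 3 ≤ degN G s' := by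
    have h1 : 3 ≤ c u2 := by rcases hcol u2 with h | h <;> omega
    exact le_trans h1 (le_trans hs'sat (cntH_le_degN G u1 c s' (c u2)))
  have mem6 : ∀ x, G.Adj u6 x → 3 ≤ degN G x → x = s' := by
    have hcard : ({w | G.Adj u6 w ∧ 3 ≤ degN G w}).ncard = 1 := p6.2
    obtain ⟨t, ht⟩ := Set.ncard_eq_one.mp hcard
    have hs'm : s' ∈ {w | G.Adj u6 w ∧ 3 ≤ degN G w} := ⟨hs'adj, degs'⟩
    rw [ht, Set.mem_singleton_iff] at hs'm
    intro x h1 h2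
    have hx : x ∈ {w | G.Adj u6 w ∧ 3 ≤ degN G w} := ⟨h1, h2⟩
    rw [ht, Set.mem_singleton_iff] at hx
    rw [hx, hs'm]
  by_cases hcv1 : c v1 = c u2
  · -- Case (i): v1 colored like u2
    have hM3 : ¬ (c v2 = c u6 → cnt (deleteVert G u1) c v2 (c u6) + 1 ≤ c u6) := by
      intro hcond
      apply hnc
      refine ⟨Function.update (Function.update c v1 (c u6)) u1 (c u2),
        validG_of G ch1 _ (upd2_colors c hcol v1 u1 _ _ (hcol u6) (hcol u2)) ?_⟩
      intro v hv
      by_cases hxv : v1 = v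
      · subst hxv
        exact deg2_ok G _ v1 (le_of_eq dv1) (upd2_colors c hcol v1 u1 _ _ (hcol u6) (hcol u2) v1)
      · by_cases h2 : u2 = v
        · subst h2
          rw [upd2_other c _ _ (Ne.symm hv1u2) hv]
          rw [cnt_exch G hv hv1u1 a2v1 a21 hcv1
            (fun h => (Ne.symm hne) ((upd2_at_x c _ _ hv1u1).symm.trans h))
            (upd2_at_u1 c _ _ _ _)
            (fun w hw hwx hwu => by rw [upd2_other c _ _ hwx hwu])]
          exact hval u2
        · by_cases h6 : u6 = v
          · subst h6
            rw [upd2_other c _ _ (Ne.symm hv1u6) hv]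
            refine le_trans (cnt_drop G hv (Or.inr ?_) ?_) (hval u6)
            · rw [upd2_at_u1]; exact hne
            · intro w haw hwu hcw
              have hwv1 : w ≠ v1 := by rintro rfl; exact na6v1 haw.symm
              rwa [upd2_other c _ _ hwv1 hwu] at hcw
          · by_cases hv2v : v2 = v
            · subst hv2v
              rw [upd2_other c _ _ (Ne.symm hv1v2) hv]
              by_cases hcv2 : c v2 = c u6
              · rw [hcv2]
                rw [cnt_enter G hv hv1u1 av21 (fun h => hne (hcv1.symm.trans h))
                  (upd2_at_x c _ _ hv1u1)
                  (Or.inl (hnadj1 v2 hv2u2 hv2u6))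
                  (fun w hw hwx hwu => by rw [upd2_other c _ _ hwx hwu])]
                exact hcond hcv2
              · refine le_trans (cnt_drop G hv (Or.inl (hnadj1 v2 hv2u2 hv2u6)) ?_) (hval v2)
                intro w haw hwu hcw
                by_cases hwv1 : w = v1
                · rw [hwv1, upd2_at_x c _ _ hv1u1] at hcw
                  exact absurd hcw.symm hcv2
                · rwa [upd2_other c _ _ hwv1 hwu] at hcw
            · rw [upd2_other c _ _ (Ne.symm hxv) hv]
              refine le_trans (cnt_drop G hv (Or.inl (hnadj1 v (Ne.symm h2) (Ne.symm h6))) ?_) (hval v)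
              intro w haw hwu hcw
              have hwv1 : w ≠ v1 := by
                rintro rfl
                rcases chv1 v haw.symm with rfl | rfl
                · exact h2 rfl
                · exact hv2v rfl
              rwa [upd2_other c _ _ hwv1 hwu] at hcw
    have hv2cl : c v2 = c u6 ∧ c u6 ≤ cnt (deleteVert G u1) c v2 (c u6) := by
      by_cases h1 : c v2 = c u6
      · by_cases hq : cnt (deleteVert G u1) c v2 (c u6) + 1 ≤ c u6
        · exact absurd (fun _ => hq) hM3
        · exact ⟨h1, by omega⟩
      · exact absurd (fun hh => absurd hh h1) hM3
    have hdv2 : 3 ≤ degN G v2 := by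
      have h1 : 3 ≤ c u6 := by rcases hcol u6 with h | h <;> omega
      exact le_trans h1 (le_trans hv2cl.2 (cntH_le_degN G u1 c v2 (c u6)))
    have hv2s' := mem6 v2 a6v2 hdv2
    apply hne
    rw [← hs'col, ← hv2s']
    exact hv2cl.1
  · -- Case (ii): v1 colored like u6
    have hcv1' : c v1 = c u6 := by
      rcases hcol v1 with h | h <;> rcases hcol u2 with h2 | h2 <;>
        rcases hcol u6 with h6 | h6 <;> omega
    have hsex : ∃ s, G.Adj u2 s ∧ s ≠ u1 ∧ c s = c u6 ∧
        c u6 ≤ cnt (deleteVert G u1) c s (c u6) := by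
      by_contra hno
      push_neg at hno
      apply hnc
      refine ⟨Function.update (Function.update c u2 (c u6)) u1 (c u2),
        validG_of G ch1 _ (upd2_colors c hcol u2 u1 _ _ (hcol u6) (hcol u2)) ?_⟩
      intro v hv
      by_cases h2 : u2 = v
      · subst h2
        rw [upd2_at_x c _ _ (Ne.symm ne12)]
        have hagg : ∀ w, G.Adj u2 w → w ≠ u1 →
            Function.update (Function.update c u2 (c u6)) u1 (c u2) w = c u6 → c w = c u6 := by
          intro w haw hwu hcw
          rwa [upd2_other c _ _ haw.ne' hwu] at hcw
        refine le_trans (cnt_drop G hv (Or.inr ?_) hagg) ?_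
        · rw [upd2_at_u1]; exact hne
        · have s2 := sat2
          have hne' := hne
          rcases hcol u2 with h2' | h2' <;> rcases hcol u6 with h6' | h6' <;>
            rw [h2', h6'] at hne' <;> rw [h2'] at s2 <;> rw [h6'] <;> omega
      · by_cases h6 : u6 = v
        · subst h6
          rw [upd2_other c _ _ (Ne.symm ne26) hv]
          have hagg : ∀ w, G.Adj u6 w → w ≠ u1 →
              Function.update (Function.update c u2 (c u6)) u1 (c u2) w = c u6 → c w = c u6 := by
            intro w haw hwu hcw
            have hw2 : w ≠ u2 := by rintro rfl; exact na26 haw.symm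
            rwa [upd2_other c _ _ hw2 hwu] at hcw
          refine le_trans (cnt_drop G hv (Or.inr ?_) hagg) (hval u6)
          rw [upd2_at_u1]; exact hne
        · rw [upd2_other c _ _ (Ne.symm h2) hv]
          by_cases hadj2 : G.Adj v u2
          · by_cases hcv : c v = c u6
            · rw [hcv]
              rw [cnt_enter G hv (Ne.symm ne12) hadj2 hne
                (upd2_at_x c _ _ (Ne.symm ne12)) (Or.inl (hnadj1 v (Ne.symm h2) (Ne.symm h6)))
                (fun w hw hwx hwu => by rw [upd2_other c _ _ hwx hwu])]
              have := hno v hadj2.symm hv hcv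
              omega
            · refine le_trans (cnt_drop G hv (Or.inl (hnadj1 v (Ne.symm h2) (Ne.symm h6))) ?_) (hval v)
              intro w haw hwu hcw
              by_cases hw2 : w = u2
              · rw [hw2, upd2_at_x c _ _ (Ne.symm ne12)] at hcw
                exact absurd hcw.symm hcv
              · rwa [upd2_other c _ _ hw2 hwu] at hcw
          · refine le_trans (cnt_drop G hv (Or.inl (hnadj1 v (Ne.symm h2) (Ne.symm h6))) ?_) (hval v)
            intro w haw hwu hcw
            have hw2 : w ≠ u2 := by rintro rfl; exact hadj2 haw
            rwa [upd2_other c _ _ hw2 hwu] at hcw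
    obtain ⟨s, hsadj, hsne, hscol, hssat⟩ := hsex
    have hdegs : 3 ≤ degN G s := by
      have h1 : 3 ≤ c u6 := by rcases hcol u6 with h | h <;> omega
      exact le_trans h1 (le_trans hssat (cntH_le_degN G u1 c s (c u6)))
    have hsv1 : v1 ≠ s := by
      intro h; rw [← h] at hdegs; omega
    have hsub2 : ({v1, s} : Set V) ⊆ {w | (deleteVert G u1).Adj u2 w ∧ c w = c u6} := by
      intro w hw
      simp only [Set.mem_insert_iff, Set.mem_singleton_iff] at hw
      rcases hw with rfl | rfl
      · exact ⟨⟨a2v1, Ne.symm ne12, hv1u1⟩, hcv1'⟩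
      · exact ⟨⟨hsadj, Ne.symm ne12, hsne⟩, hscol⟩
    have h2le : 2 ≤ cnt (deleteVert G u1) c u2 (c u6) := by
      have h := Set.ncard_le_ncard hsub2 (Set.toFinite _)
      rwa [Set.ncard_pair hsv1] at h
    have hc23 : c u2 = 3 ∧ c u6 = 4 := by
      have s2 := sat2
      have hne' := hne
      rcases hcol u2 with h2 | h2 <;> rcases hcol u6 with h6 | h6 <;>
        rw [h2, h6] at hne' <;> rw [h2] at s2 <;> rw [h6] at h2le <;> omega
    obtain ⟨hq2, hq6⟩ := hc23
    have hBcard : cnt (deleteVert G u1) c u2 (c u6) = 2 := by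
      have s2 := sat2; rw [hq2] at s2; rw [hq6]; omega
    have hB2 : ({v1, s} : Set V) = {w | (deleteVert G u1).Adj u2 w ∧ c w = c u6} :=
      Set.eq_of_subset_of_ncard_le hsub2
        (by rw [Set.ncard_pair hsv1]; exact le_of_eq hBcard) (Set.toFinite _)
    have hcu3 : c u3 = c u2 := by
      rcases hcol u3 with h3 | h3
      · rw [h3, hq2]
      · exfalso
        have hm : u3 ∈ {w | (deleteVert G u1).Adj u2 w ∧ c w = c u6} :=
          ⟨⟨a23, Ne.symm ne12, Ne.symm ne13⟩, by rw [h3, hq6]⟩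
        rw [← hB2] at hm
        simp only [Set.mem_insert_iff, Set.mem_singleton_iff] at hm
        rcases hm with h | h
        · exact hv1u3 h.symm
        · rw [← h] at hdegs
          omega
    have hA6card : cnt (deleteVert G u1) c u6 (c u2) = 1 := by
      have s6 := sat6; rw [hq6] at s6; rw [hq2]; omega
    have mem6H : ∀ x, (deleteVert G u1).Adj u6 x → c x = c u2 → x = s' := by
      obtain ⟨t, ht⟩ := Set.ncard_eq_one.mp hA6card
      have hs'm : s' ∈ {w | (deleteVert G u1).Adj u6 w ∧ c w = c u2} :=
        ⟨⟨hs'adj, Ne.symm ne16, hs'ne⟩, hs'col⟩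
      rw [ht, Set.mem_singleton_iff] at hs'm
      intro x h1x h2x
      have hx : x ∈ {w | (deleteVert G u1).Adj u6 w ∧ c w = c u2} := ⟨h1x, h2x⟩
      rw [ht, Set.mem_singleton_iff] at hx
      rw [hx, hs'm]
    have hcu5 : c u5 = c u6 := by
      rcases hcol u5 with h5 | h5
      · exfalso
        have h := mem6H u5 ⟨a65, Ne.symm ne16, Ne.symm ne15⟩ (by rw [h5, hq2])
        rw [← h] at degs'
        omega
      · rw [h5, hq6]
    by_cases hdv2 : degN G v2 = 2
    · -- M4: recolor v2, give u1 the color of u6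
      have hcv2 : c v2 = c u6 := by
        rcases hcol v2 with h | h
        · exfalso
          have hh := mem6H v2 ⟨a6v2, Ne.symm ne16, hv2u1⟩ (by rw [h, hq2])
          rw [← hh] at degs'
          omega
        · rw [h, hq6]
      have chv2 : ∀ w, G.Adj v2 w → w = v1 ∨ w = u6 := nbr2 G hdv2 av21 av26 hv1u6
      apply hnc
      refine ⟨Function.update (Function.update c v2 (c u2)) u1 (c u6),
        validG_of G ch1 _ (upd2_colors c hcol v2 u1 _ _ (hcol u2) (hcol u6)) ?_⟩
      intro v hv
      by_cases hxv : v2 = v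
      · subst hxv
        exact deg2_ok G _ v2 (le_of_eq hdv2) (upd2_colors c hcol v2 u1 _ _ (hcol u2) (hcol u6) v2)
      · by_cases h6 : u6 = v
        · subst h6
          rw [upd2_other c _ _ (Ne.symm hv2u6) hv]
          rw [cnt_exch G hv hv2u1 a6v2 a61 hcv2
            (fun h => hne ((upd2_at_x c _ _ hv2u1).symm.trans h))
            (upd2_at_u1 c _ _ _ _)
            (fun w hw hwx hwu => by rw [upd2_other c _ _ hwx hwu])]
          exact hval u6
        · by_cases h2 : u2 = v
          · subst h2
            rw [upd2_other c _ _ (Ne.symm hv2u2) hv]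
            refine le_trans (cnt_drop G hv (Or.inr ?_) ?_) (hval u2)
            · rw [upd2_at_u1]; exact Ne.symm hne
            · intro w haw hwu hcw
              have hwv2 : w ≠ v2 := by rintro rfl; exact nav2u2 haw.symm
              rwa [upd2_other c _ _ hwv2 hwu] at hcw
          · by_cases hv1v : v1 = v
            · subst hv1v
              exact deg2_ok G _ v1 (le_of_eq dv1) (upd2_colors c hcol v2 u1 _ _ (hcol u2) (hcol u6) v1)
            · rw [upd2_other c _ _ (Ne.symm hxv) hv]
              refine le_trans (cnt_drop G hv (Or.inl (hnadj1 v (Ne.symm h2) (Ne.symm h6))) ?_) (hval v)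
              intro w haw hwu hcw
              have hwv2 : w ≠ v2 := by
                rintro rfl
                rcases chv2 v haw.symm with rfl | rfl
                · exact hv1v rfl
                · exact h6 rfl
              rwa [upd2_other c _ _ hwv2 hwu] at hcw
    · -- M5 / M6
      by_cases hM5c : c u4 = c u6 → cnt (deleteVert G u1) c u4 (c u6) + 1 ≤ c u6
      · -- M5: recolor u3, give u1 the color of u2
        apply hnc
        refine ⟨Function.update (Function.update c u3 (c u6)) u1 (c u2),
          validG_of G ch1 _ (upd2_colors c hcol u3 u1 _ _ (hcol u6) (hcol u2)) ?_⟩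
        intro v hv
        by_cases hxv : u3 = v
        · subst hxv
          exact deg2_ok G _ u3 (le_of_eq d3) (upd2_colors c hcol u3 u1 _ _ (hcol u6) (hcol u2) u3)
        · by_cases h2 : u2 = v
          · subst h2
            rw [upd2_other c _ _ ne23 hv]
            rw [cnt_exch G hv (Ne.symm ne13) a23 a21 hcu3
              (fun h => (Ne.symm hne) ((upd2_at_x c _ _ (Ne.symm ne13)).symm.trans h))
              (upd2_at_u1 c _ _ _ _)
              (fun w hw hwx hwu => by rw [upd2_other c _ _ hwx hwu])]
            exact hval u2
          · by_cases h6 : u6 = v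
            · subst h6
              rw [upd2_other c _ _ (Ne.symm ne36) hv]
              refine le_trans (cnt_drop G hv (Or.inr ?_) ?_) (hval u6)
              · rw [upd2_at_u1]; exact hne
              · intro w haw hwu hcw
                have hw3 : w ≠ u3 := by rintro rfl; exact na36 haw.symm
                rwa [upd2_other c _ _ hw3 hwu] at hcw
            · by_cases h4 : u4 = v
              · subst h4
                rw [upd2_other c _ _ (Ne.symm ne34) hv]
                by_cases hc4 : c u4 = c u6
                · rw [hc4]
                  rw [cnt_enter G hv (Ne.symm ne13) a43 (fun h => hne (hcu3.symm.trans h))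
                    (upd2_at_x c _ _ (Ne.symm ne13))
                    (Or.inl (hnadj1 u4 (Ne.symm ne24) ne46))
                    (fun w hw hwx hwu => by rw [upd2_other c _ _ hwx hwu])]
                  exact hM5c hc4
                · refine le_trans (cnt_drop G hv (Or.inl (hnadj1 u4 (Ne.symm ne24) ne46)) ?_) (hval u4)
                  intro w haw hwu hcw
                  by_cases hw3 : w = u3
                  · rw [hw3, upd2_at_x c _ _ (Ne.symm ne13)] at hcw
                    exact absurd hcw.symm hc4
                  · rwa [upd2_other c _ _ hw3 hwu] at hcw
              · rw [upd2_other c _ _ (Ne.symm hxv) hv]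
                refine le_trans (cnt_drop G hv (Or.inl (hnadj1 v (Ne.symm h2) (Ne.symm h6))) ?_) (hval v)
                intro w haw hwu hcw
                have hw3 : w ≠ u3 := by
                  rintro rfl
                  rcases ch3 v haw.symm with rfl | rfl
                  · exact h2 rfl
                  · exact h4 rfl
                rwa [upd2_other c _ _ hw3 hwu] at hcw
      · push_neg at hM5c
        obtain ⟨hc4, -⟩ := hM5c
        -- M6: recolor u5, give u1 the color of u6
        apply hnc
        refine ⟨Function.update (Function.update c u5 (c u2)) u1 (c u6),
          validG_of G ch1 _ (upd2_colors c hcol u5 u1 _ _ (hcol u2) (hcol u6)) ?_⟩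
        intro v hv
        by_cases hxv : u5 = v
        · subst hxv
          exact deg2_ok G _ u5 (le_of_eq d5) (upd2_colors c hcol u5 u1 _ _ (hcol u2) (hcol u6) u5)
        · by_cases h6 : u6 = v
          · subst h6
            rw [upd2_other c _ _ (Ne.symm ne56) hv]
            rw [cnt_exch G hv (Ne.symm ne15) a65 a61 hcu5
              (fun h => hne ((upd2_at_x c _ _ (Ne.symm ne15)).symm.trans h))
              (upd2_at_u1 c _ _ _ _)
              (fun w hw hwx hwu => by rw [upd2_other c _ _ hwx hwu])]
            exact hval u6
          · by_cases h2 : u2 = v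
            · subst h2
              rw [upd2_other c _ _ ne25 hv]
              refine le_trans (cnt_drop G hv (Or.inr ?_) ?_) (hval u2)
              · rw [upd2_at_u1]; exact Ne.symm hne
              · intro w haw hwu hcw
                have hw5 : w ≠ u5 := by rintro rfl; exact na52 haw.symm
                rwa [upd2_other c _ _ hw5 hwu] at hcw
            · by_cases h4 : u4 = v
              · subst h4
                rw [upd2_other c _ _ ne45 hv]
                refine le_trans (cnt_drop G hv (Or.inl (hnadj1 u4 (Ne.symm ne24) ne46)) ?_) (hval u4)
                intro w haw hwu hcw
                by_cases hw5 : w = u5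
                · rw [hw5, upd2_at_x c _ _ (Ne.symm ne15)] at hcw
                  exact absurd (hcw.trans hc4) hne
                · rwa [upd2_other c _ _ hw5 hwu] at hcw
              · rw [upd2_other c _ _ (Ne.symm hxv) hv]
                refine le_trans (cnt_drop G hv (Or.inl (hnadj1 v (Ne.symm h2) (Ne.symm h6))) ?_) (hval v)
                intro w haw hwu hcw
                have hw5 : w ≠ u5 := by
                  rintro rfl
                  rcases ch5 v haw.symm with rfl | rfl
                  · exact h4 rfl
                  · exact h6 rfl
                rwa [upd2_other c _ _ hw5 hwu] at hcw

end Key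

/-- In a minimally non-(3,4)-colorable graph of girth at least 5, a
6-cycle `u₁…u₆` with `u₁, u₃, u₅` of degree 2 and `u₂, u₄, u₆` 6p-vertices (the
face `F₆♭`) cannot share the path `u₂u₁u₆` with a 5-cycle `u₆u₁u₂v₁v₂` in which
`v₁` or `v₂` has degree 2. -/
theorem stmt_17 {V : Type*} [Fintype V] (G : SimpleGraph V)
    (hG : MinNonColorable34 G) (hgirth : GirthAtLeast5 G)
    (u1 u2 u3 u4 u5 u6 : V)
    (hnd : ([u1, u2, u3, u4, u5, u6] : List V).Nodup)
    (a12 : G.Adj u1 u2) (a23 : G.Adj u2 u3) (a34 : G.Adj u3 u4)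
    (a45 : G.Adj u4 u5) (a56 : G.Adj u5 u6) (a61 : G.Adj u6 u1)
    (d1 : degN G u1 = 2) (d3 : degN G u3 = 2) (d5 : degN G u5 = 2)
    (p2 : Is6p G u2) (p4 : Is6p G u4) (p6 : Is6p G u6) :
    ¬ ∃ v1 v2 : V, v1 ≠ v2 ∧
      v1 ∉ ({u1, u2, u3, u4, u5, u6} : Set V) ∧
      v2 ∉ ({u1, u2, u3, u4, u5, u6} : Set V) ∧
      G.Adj u2 v1 ∧ G.Adj v1 v2 ∧ G.Adj v2 u6 ∧
      (degN G v1 = 2 ∨ degN G v2 = 2) := by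
  rintro ⟨v1, v2, hne, hv1n, hv2n, h2v1, hv12, hv26, hdeg⟩
  simp only [List.nodup_cons, List.mem_cons, List.not_mem_nil, or_false, not_or,
    List.nodup_nil, and_true, List.mem_singleton] at hnd
  obtain ⟨⟨ne12, ne13, ne14, ne15, ne16⟩, ⟨ne23, ne24, ne25, ne26⟩,
    ⟨ne34, ne35, ne36⟩, ⟨ne45, ne46⟩, ne56, -⟩ := hnd
  simp only [Set.mem_insert_iff, Set.mem_singleton_iff, not_or] at hv1n hv2n
  obtain ⟨hv1u1, hv1u2, hv1u3, hv1u4, hv1u5, hv1u6⟩ := hv1n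
  obtain ⟨hv2u1, hv2u2, hv2u3, hv2u4, hv2u5, hv2u6⟩ := hv2n
  rcases hdeg with hd | hd
  · exact key G hG hgirth u1 u2 u3 u4 u5 u6 v1 v2
      ne12 ne13 ne14 ne15 ne16 ne23 ne24 ne25 ne26 ne34 ne35 ne36 ne45 ne46 ne56
      hv1u1 hv1u2 hv1u3 hv1u4 hv1u5 hv1u6
      hv2u1 hv2u2 hv2u3 hv2u4 hv2u5 hv2u6 hne
      a12 a23 a34 a45 a56 a61 d1 d3 d5 p2 p6 h2v1 hv12 hv26 hd
  · exact key G hG hgirth u1 u6 u5 u4 u3 u2 v2 v1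
      ne16 ne15 ne14 ne13 ne12 (Ne.symm ne56) (Ne.symm ne46) (Ne.symm ne36)
      (Ne.symm ne26) (Ne.symm ne45) (Ne.symm ne35) (Ne.symm ne25)
      (Ne.symm ne34) (Ne.symm ne24) (Ne.symm ne23)
      hv2u1 hv2u6 hv2u5 hv2u4 hv2u3 hv2u2
      hv1u1 hv1u6 hv1u5 hv1u4 hv1u3 hv1u2 (Ne.symm hne)
      a61.symm a56.symm a45.symm a34.symm a23.symm a12.symm
      d1 d5 d3 p6 p2 hv26.symm hv12.symm h2v1.symm hd
end

section
/- Let G be a minimally non-(3,4)-colorable graph with girth at least 5, and let C = u_1 u_2 u_3 u_4 u_5 be a 5-cycle in G such that u_1 has degree 2 and u_2, u_3, u_4, u_5 all have degree at least 3. Then either at most two of the vertices u_2, u_3, u_4, u_5 are 5p-, 5s-, or 6p-vertices, or some vertex of C is either a vertex of degree at least 7 with at least three 3^+-neighbors or a vertex of degree at least 9. -/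
namespace Stmt18Aux
variable {V : Type*} [Fintype V] [DecidableEq V]
set_option linter.unusedSectionVars false
set_option linter.unusedVariables false

/-- The set of neighbors of `x` in `H` that have color `i`. -/
def nbS (H : SimpleGraph V) (c : V → ℕ) (i : ℕ) (x : V) : Set V :=
  {w | H.Adj x w ∧ c w = i}

lemma mem_nbS {H : SimpleGraph V} {c : V → ℕ} {i : ℕ} {x w : V} :
    w ∈ nbS H c i x ↔ H.Adj x w ∧ c w = i := Iff.rfl

lemma cnt_le {H : SimpleGraph V} {c : V → ℕ} (hc : IsColoring34 H c) (x : V) :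
    (nbS H c (c x) x).ncard ≤ c x := hc.2 x

lemma nbS_ncard_le_degN (H : SimpleGraph V) (c : V → ℕ) (i : ℕ) (x : V) :
    (nbS H c i x).ncard ≤ degN H x :=
  Set.ncard_le_ncard (fun _ hw => hw.1) (Set.toFinite _)

lemma nbS_partition (H : SimpleGraph V) {c : V → ℕ} (hv : ∀ v, c v = 3 ∨ c v = 4) (x : V) :
    (nbS H c 3 x).ncard + (nbS H c 4 x).ncard = degN H x := by
  have hdis : Disjoint (nbS H c 3 x) (nbS H c 4 x) := by
    rw [Set.disjoint_left]; rintro w ⟨_, h3⟩ ⟨_, h4⟩; omega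
  have hun : nbS H c 3 x ∪ nbS H c 4 x = {w | H.Adj x w} := by
    ext w
    simp only [nbS, Set.mem_union, Set.mem_setOf_eq]
    constructor
    · rintro (⟨h, _⟩ | ⟨h, _⟩) <;> exact h
    · intro h; rcases hv w with h3 | h4
      · exact Or.inl ⟨h, h3⟩
      · exact Or.inr ⟨h, h4⟩
  rw [← Set.ncard_union_eq hdis (Set.toFinite _) (Set.toFinite _), hun]; rfl

lemma hGen {H : SimpleGraph V} {c : V → ℕ} (hc : IsColoring34 H c) (c' : V → ℕ) (w : V)
    (hcw : c' w = c w)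
    (hs : ∀ u, H.Adj w u → c' u = c' w → c u = c w) :
    (nbS H c' (c' w) w).ncard ≤ c' w := by
  have hsub : nbS H c' (c' w) w ⊆ nbS H c (c w) w :=
    fun u hu => ⟨hu.1, hs u hu.1 hu.2⟩
  calc (nbS H c' (c' w) w).ncard ≤ (nbS H c (c w) w).ncard :=
        Set.ncard_le_ncard hsub (Set.toFinite _)
    _ ≤ c w := hc.2 w
    _ = c' w := hcw.symm

lemma hGain {H : SimpleGraph V} {c : V → ℕ} (hc : IsColoring34 H c) (c' : V → ℕ) (w a : V)
    (hcw : c' w = c w)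
    (hs : ∀ u, H.Adj w u → c' u = c' w → c u = c w ∨ u = a)
    (hlt : (nbS H c (c w) w).ncard < c w) :
    (nbS H c' (c' w) w).ncard ≤ c' w := by
  have hsub : nbS H c' (c' w) w ⊆ insert a (nbS H c (c w) w) := by
    rintro u ⟨h1, h2⟩
    rcases hs u h1 h2 with h | h
    · exact Set.mem_insert_of_mem _ ⟨h1, h⟩
    · exact h ▸ Set.mem_insert _ _
  calc (nbS H c' (c' w) w).ncard ≤ (insert a (nbS H c (c w) w)).ncard :=
        Set.ncard_le_ncard hsub (Set.toFinite _)
    _ ≤ (nbS H c (c w) w).ncard + 1 := Set.ncard_insert_le _ _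
    _ ≤ c w := hlt
    _ = c' w := hcw.symm

lemma flip1 {H : SimpleGraph V} {c : V → ℕ} (hc : IsColoring34 H c) (x : V) (j : ℕ)
    (hj : j = 3 ∨ j = 4)
    (h1 : (nbS H c j x).ncard ≤ j)
    (h2 : ∀ w, H.Adj x w → c w = j → (nbS H c j w).ncard < j) :
    IsColoring34 H (Function.update c x j) := by
  set c' := Function.update c x j with hc'def
  have hx : c' x = j := Function.update_self x j c
  have hne : ∀ u, u ≠ x → c' u = c u := fun u hu => Function.update_of_ne hu j c
  constructor
  · intro v
    by_cases hv : v = x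
    · rw [hv, hx]; exact hj
    · rw [hne v hv]; exact hc.1 v
  · intro v
    by_cases hv : v = x
    · subst hv
      have hsub : nbS H c' j v ⊆ nbS H c j v := by
        rintro u ⟨h1u, h2u⟩
        have hu : u ≠ v := fun h => H.loopless.irrefl v (h ▸ h1u)
        exact ⟨h1u, by rw [← hne u hu]; exact h2u⟩
      rw [hx]
      exact le_trans (Set.ncard_le_ncard hsub (Set.toFinite _)) h1
    · by_cases hadj : H.Adj v x
      · by_cases hcv : c v = j
        · refine hGain hc c' v x (hne v hv) ?_ ?_
          · intro u h1u h2u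
            by_cases hux : u = x
            · exact Or.inr hux
            · left; rw [← hne u hux, h2u, hne v hv]
          · rw [hcv]; exact h2 v (H.adj_symm hadj) hcv
        · refine hGen hc c' v (hne v hv) ?_
          intro u h1u h2u
          by_cases hux : u = x
          · exfalso; rw [hux, hx] at h2u; rw [hne v hv] at h2u; exact hcv h2u.symm
          · rw [← hne u hux, h2u, hne v hv]
      · refine hGen hc c' v (hne v hv) ?_
        intro u h1u h2u
        have hux : u ≠ x := fun h => hadj (h ▸ h1u)
        rw [← hne u hux, h2u, hne v hv]

lemma flip2 {H : SimpleGraph V} {c : V → ℕ} (hc : IsColoring34 H c) (x y : V) (j k : ℕ)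
    (hj : j = 3 ∨ j = 4) (hk : k = 3 ∨ k = 4) (hjk : j ≠ k) (hxy : x ≠ y)
    (hx1 : (nbS H c j x \ {y}).ncard ≤ j)
    (hy1 : (nbS H c k y \ {x}).ncard ≤ k)
    (h2x : ∀ w, H.Adj x w → w ≠ y → c w = j → (nbS H c j w).ncard < j)
    (h2y : ∀ w, H.Adj y w → w ≠ x → c w = k → (nbS H c k w).ncard < k) :
    IsColoring34 H (Function.update (Function.update c x j) y k) := by
  set c' := Function.update (Function.update c x j) y k with hdef
  have hcx : c' x = j := by
    rw [hdef, Function.update_of_ne hxy, Function.update_self]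
  have hcy : c' y = k := by rw [hdef]; simp
  have hne : ∀ u, u ≠ x → u ≠ y → c' u = c u := fun u h1 h2 => by
    rw [hdef, Function.update_of_ne h2, Function.update_of_ne h1]
  constructor
  · intro v
    by_cases h1 : v = y
    · rw [h1, hcy]; exact hk
    · by_cases h0 : v = x
      · rw [h0, hcx]; exact hj
      · rw [hne v h0 h1]; exact hc.1 v
  · intro v
    by_cases hvx : v = x
    · subst hvx
      have hsub : nbS H c' j v ⊆ nbS H c j v \ {y} := by
        rintro u ⟨h1u, h2u⟩
        have hu : u ≠ v := fun h => H.loopless.irrefl v (h ▸ h1u)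
        by_cases huy : u = y
        · exfalso; rw [huy, hcy] at h2u; exact hjk h2u.symm
        · exact ⟨⟨h1u, by rw [← hne u hu huy]; exact h2u⟩, huy⟩
      rw [hcx]
      exact le_trans (Set.ncard_le_ncard hsub (Set.toFinite _)) hx1
    · by_cases hvy : v = y
      · subst hvy
        have hsub : nbS H c' k v ⊆ nbS H c k v \ {x} := by
          rintro u ⟨h1u, h2u⟩
          have hu : u ≠ v := fun h => H.loopless.irrefl v (h ▸ h1u)
          by_cases hux : u = x
          · exfalso; rw [hux, hcx] at h2u; exact hjk h2u
          · exact ⟨⟨h1u, by rw [← hne u hux hu]; exact h2u⟩, hux⟩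
        rw [hcy]
        exact le_trans (Set.ncard_le_ncard hsub (Set.toFinite _)) hy1
      · have hcv : c' v = c v := hne v hvx hvy
        have hvals : c v = j ∨ c v = k := by
          rcases hc.1 v with h | h <;> rcases hj with h' | h' <;> rcases hk with h'' | h'' <;> omega
        rcases hvals with hcvj | hcvk
        · by_cases hadjx : H.Adj v x
          · refine hGain hc c' v x hcv ?_ ?_
            · intro u h1u h2u
              by_cases hux : u = x
              · exact Or.inr hux
              · by_cases huy : u = y
                · exfalso; rw [huy, hcy, hcv, hcvj] at h2u; exact hjk h2u.symm
                · left; rw [← hne u hux huy, h2u, hcv]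
            · rw [hcvj]; exact h2x v (H.adj_symm hadjx) hvy hcvj
          · refine hGen hc c' v hcv ?_
            intro u h1u h2u
            by_cases hux : u = x
            · exact absurd (hux ▸ h1u) hadjx
            · by_cases huy : u = y
              · exfalso; rw [huy, hcy, hcv, hcvj] at h2u; exact hjk h2u.symm
              · rw [← hne u hux huy, h2u, hcv]
        · by_cases hadjy : H.Adj v y
          · refine hGain hc c' v y hcv ?_ ?_
            · intro u h1u h2u
              by_cases huy : u = y
              · exact Or.inr huy
              · by_cases hux : u = x
                · exfalso; rw [hux, hcx, hcv, hcvk] at h2u; exact hjk h2u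
                · left; rw [← hne u hux huy, h2u, hcv]
            · rw [hcvk]; exact h2y v (H.adj_symm hadjy) hvx hcvk
          · refine hGen hc c' v hcv ?_
            intro u h1u h2u
            by_cases huy : u = y
            · exact absurd (huy ▸ h1u) hadjy
            · by_cases hux : u = x
              · exfalso; rw [hux, hcx, hcv, hcvk] at h2u; exact hjk h2u
              · rw [← hne u hux huy, h2u, hcv]

end Stmt18Aux

namespace Stmt18Aux2
open Stmt18Aux
variable {V : Type*} [Fintype V] [DecidableEq V]
set_option linter.unusedSectionVars false

lemma nbS_update_ne (H : SimpleGraph V) (c : V → ℕ) {j i : ℕ} (hji : j ≠ i) (x y : V) :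
    nbS H (Function.update c x j) i y = nbS H c i y \ {x} := by
  ext w
  constructor
  · rintro ⟨hadj, hcw⟩
    by_cases hwx : w = x
    · subst hwx; rw [Function.update_self] at hcw; exact absurd hcw hji
    · rw [Function.update_of_ne hwx] at hcw
      exact ⟨⟨hadj, hcw⟩, hwx⟩
  · rintro ⟨⟨hadj, hcw⟩, hwx⟩
    exact ⟨hadj, by rwa [Function.update_of_ne hwx]⟩

lemma nbS_update_nadj (H : SimpleGraph V) (c : V → ℕ) (j i : ℕ) {x y : V} (h : ¬ H.Adj y x) :
    nbS H (Function.update c x j) i y = nbS H c i y := by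
  ext w
  have hwx : w ∈ nbS H (Function.update c x j) i y → w ≠ x := by
    rintro ⟨hadj, _⟩ rfl; exact h hadj
  constructor
  · rintro hw
    obtain ⟨hadj, hcw⟩ := hw
    rw [Function.update_of_ne (hwx ⟨hadj, hcw⟩)] at hcw
    exact ⟨hadj, hcw⟩
  · rintro ⟨hadj, hcw⟩
    have : w ≠ x := by rintro rfl; exact h hadj
    exact ⟨hadj, by rwa [Function.update_of_ne this]⟩

/-- structure of a poorish vertex relative to one designated big neighbor -/
lemma poor_struct (G : SimpleGraph V) (x a : V)
    (hp : Is5p G x ∨ Is5s G x ∨ Is6p G x) (ha : G.Adj x a) (hda : 3 ≤ degN G a) :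
    (degN G x = 5 ∨ degN G x = 6) ∧ ∃ z,
      (z = a ∨ (G.Adj x z ∧ 3 ≤ degN G z ∧ z ≠ a ∧ degN G x = 5)) ∧
      ∀ w, G.Adj x w → 3 ≤ degN G w → (w = a ∨ w = z) := by
  have hma : a ∈ {w | G.Adj x w ∧ 3 ≤ degN G w} := ⟨ha, hda⟩
  have h1case : tpn G x = 1 → ∀ w, G.Adj x w → 3 ≤ degN G w → w = a := by
    intro ht w hw1 hw2
    have hsub : {a} ⊆ {w | G.Adj x w ∧ 3 ≤ degN G w} := by
      rintro y rfl; exact hma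
    have heq : {a} = {w | G.Adj x w ∧ 3 ≤ degN G w} :=
      Set.eq_of_subset_of_ncard_le hsub (by
        show tpn G x ≤ _
        rw [ht, Set.ncard_singleton]) (Set.toFinite _)
    have : w ∈ ({a} : Set V) := heq ▸ (⟨hw1, hw2⟩ : w ∈ {w | G.Adj x w ∧ 3 ≤ degN G w})
    exact this
  rcases hp with ⟨hd, ht⟩ | ⟨hd, ht⟩ | ⟨hd, ht⟩
  · exact ⟨Or.inl hd, a, Or.inl rfl, fun w h1 h2 => Or.inl (h1case ht w h1 h2)⟩
  · -- 5s
    refine ⟨Or.inl hd, ?_⟩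
    obtain ⟨p, q, hpq, hset⟩ := Set.ncard_eq_two.mp ht
    have hmem : a ∈ ({p, q} : Set V) := hset ▸ hma
    rcases hmem with rfl | rfl
    · -- a = p, z := q
      have hq : q ∈ {w | G.Adj x w ∧ 3 ≤ degN G w} := hset ▸ (by right; rfl)
      refine ⟨q, Or.inr ⟨hq.1, hq.2, fun h => hpq h.symm, hd⟩, ?_⟩
      intro w h1 h2
      have : w ∈ ({a, q} : Set V) := hset ▸ (⟨h1, h2⟩ : w ∈ {w | G.Adj x w ∧ 3 ≤ degN G w})
      exact this
    · -- a = q, z := p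
      have hq : p ∈ {w | G.Adj x w ∧ 3 ≤ degN G w} := hset ▸ (by left; rfl)
      refine ⟨p, Or.inr ⟨hq.1, hq.2, fun h => hpq h, hd⟩, ?_⟩
      intro w h1 h2
      have : w ∈ ({p, a} : Set V) := hset ▸ (⟨h1, h2⟩ : w ∈ {w | G.Adj x w ∧ 3 ≤ degN G w})
      rcases this with h | h
      · exact Or.inr h
      · exact Or.inl h
  · exact ⟨Or.inr hd, a, Or.inl rfl, fun w h1 h2 => Or.inl (h1case ht w h1 h2)⟩

/-- a poorish vertex with two designated big neighbors is semi-poor -/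
lemma semi_struct (G : SimpleGraph V) (x a b : V)
    (hp : Is5p G x ∨ Is5s G x ∨ Is6p G x) (hab : a ≠ b)
    (ha : G.Adj x a) (hda : 3 ≤ degN G a) (hb : G.Adj x b) (hdb : 3 ≤ degN G b) :
    degN G x = 5 ∧ ∀ w, G.Adj x w → 3 ≤ degN G w → (w = a ∨ w = b) := by
  have hsub : {a, b} ⊆ {w | G.Adj x w ∧ 3 ≤ degN G w} := by
    rintro y (rfl | rfl)
    · exact ⟨ha, hda⟩
    · exact ⟨hb, hdb⟩
  have h2 : 2 ≤ tpn G x := by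
    have := Set.ncard_le_ncard hsub (Set.toFinite _)
    rwa [Set.ncard_pair hab] at this
  rcases hp with ⟨hd, ht⟩ | ⟨hd, ht⟩ | ⟨hd, ht⟩
  · omega
  · refine ⟨hd, ?_⟩
    have heq : {a, b} = {w | G.Adj x w ∧ 3 ≤ degN G w} :=
      Set.eq_of_subset_of_ncard_le hsub (by
        show tpn G x ≤ _
        rw [ht, Set.ncard_pair hab]) (Set.toFinite _)
    intro w h1 h2'
    have : w ∈ ({a, b} : Set V) := heq ▸ (⟨h1, h2'⟩ : w ∈ {w | G.Adj x w ∧ 3 ≤ degN G w})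
    exact this
  · omega

lemma flip4 {H : SimpleGraph V} {c : V → ℕ} (hc : IsColoring34 H c) (x1 x2 x3 x4 : V)
    (a12 : H.Adj x1 x2) (a23 : H.Adj x2 x3) (a34 : H.Adj x3 x4)
    (nadj13 : ¬ H.Adj x1 x3) (nadj14 : ¬ H.Adj x1 x4) (nadj24 : ¬ H.Adj x2 x4)
    (ne13 : x1 ≠ x3) (ne14 : x1 ≠ x4) (ne24 : x2 ≠ x4)
    (hc1 : c x1 = 4) (hc2 : c x2 = 3) (hc3 : c x3 = 4) (hc4 : c x4 = 3)
    (h1 : (nbS H c 3 x1 \ {x2}).ncard ≤ 3)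
    (h2 : (nbS H c 4 x2 \ {x1, x3}).ncard ≤ 4)
    (h3 : (nbS H c 3 x3 \ {x2, x4}).ncard ≤ 3)
    (h4 : (nbS H c 4 x4 \ {x3}).ncard ≤ 4)
    (r3 : ∀ w, w ≠ x1 → w ≠ x2 → w ≠ x3 → w ≠ x4 → c w = 3 →
      (H.Adj x1 w ∨ H.Adj x3 w) → degN H w ≤ 2)
    (r4 : ∀ w, w ≠ x1 → w ≠ x2 → w ≠ x3 → w ≠ x4 → c w = 4 →
      (H.Adj x2 w ∨ H.Adj x4 w) → degN H w ≤ 2) :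
    IsColoring34 H
      (Function.update (Function.update (Function.update (Function.update c x1 3) x2 4) x3 3) x4 4) := by
  have ne12 : x1 ≠ x2 := H.ne_of_adj a12
  have ne23 : x2 ≠ x3 := H.ne_of_adj a23
  have ne34 : x3 ≠ x4 := H.ne_of_adj a34
  set c' := Function.update (Function.update (Function.update (Function.update c x1 3) x2 4) x3 3) x4 4 with hdef
  have e1 : c' x1 = 3 := by
    rw [hdef, Function.update_of_ne ne14, Function.update_of_ne ne13,
      Function.update_of_ne ne12, Function.update_self]
  have e2 : c' x2 = 4 := by
    rw [hdef, Function.update_of_ne ne24, Function.update_of_ne ne23, Function.update_self]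
  have e3 : c' x3 = 3 := by
    rw [hdef, Function.update_of_ne ne34, Function.update_self]
  have e4 : c' x4 = 4 := by rw [hdef]; simp
  have hne : ∀ u, u ≠ x1 → u ≠ x2 → u ≠ x3 → u ≠ x4 → c' u = c u := fun u k1 k2 k3 k4 => by
    rw [hdef, Function.update_of_ne k4, Function.update_of_ne k3,
      Function.update_of_ne k2, Function.update_of_ne k1]
  constructor
  · intro v
    by_cases hv1 : v = x1
    · rw [hv1, e1]; left; rfl
    by_cases hv2 : v = x2
    · rw [hv2, e2]; right; rfl
    by_cases hv3 : v = x3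
    · rw [hv3, e3]; left; rfl
    by_cases hv4 : v = x4
    · rw [hv4, e4]; right; rfl
    · rw [hne v hv1 hv2 hv3 hv4]; exact hc.1 v
  · intro v
    by_cases hv1 : v = x1
    · have hsub : nbS H c' 3 x1 ⊆ nbS H c 3 x1 \ {x2} := by
        rintro u ⟨hadj, hcu⟩
        have hu1 : u ≠ x1 := fun h => H.loopless.irrefl x1 (h ▸ hadj)
        have hu2 : u ≠ x2 := by rintro rfl; rw [e2] at hcu; omega
        have hu3 : u ≠ x3 := by rintro rfl; exact nadj13 hadj
        have hu4 : u ≠ x4 := by rintro rfl; exact nadj14 hadj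
        rw [hne u hu1 hu2 hu3 hu4] at hcu
        exact ⟨⟨hadj, hcu⟩, hu2⟩
      rw [hv1, e1]
      calc (nbS H c' 3 x1).ncard ≤ _ := Set.ncard_le_ncard hsub (Set.toFinite _)
        _ ≤ 3 := h1
    by_cases hv2 : v = x2
    · have hsub : nbS H c' 4 x2 ⊆ nbS H c 4 x2 \ {x1, x3} := by
        rintro u ⟨hadj, hcu⟩
        have hu2 : u ≠ x2 := fun h => H.loopless.irrefl x2 (h ▸ hadj)
        have hu1 : u ≠ x1 := by rintro rfl; rw [e1] at hcu; omega
        have hu3 : u ≠ x3 := by rintro rfl; rw [e3] at hcu; omega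
        have hu4 : u ≠ x4 := by rintro rfl; exact nadj24 hadj
        rw [hne u hu1 hu2 hu3 hu4] at hcu
        exact ⟨⟨hadj, hcu⟩, by simp [hu1, hu3]⟩
      rw [hv2, e2]
      calc (nbS H c' 4 x2).ncard ≤ _ := Set.ncard_le_ncard hsub (Set.toFinite _)
        _ ≤ 4 := h2
    by_cases hv3 : v = x3
    · have hsub : nbS H c' 3 x3 ⊆ nbS H c 3 x3 \ {x2, x4} := by
        rintro u ⟨hadj, hcu⟩
        have hu3 : u ≠ x3 := fun h => H.loopless.irrefl x3 (h ▸ hadj)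
        have hu2 : u ≠ x2 := by rintro rfl; rw [e2] at hcu; omega
        have hu4 : u ≠ x4 := by rintro rfl; rw [e4] at hcu; omega
        have hu1 : u ≠ x1 := by rintro rfl; exact nadj13 (H.adj_symm hadj)
        rw [hne u hu1 hu2 hu3 hu4] at hcu
        exact ⟨⟨hadj, hcu⟩, by simp [hu2, hu4]⟩
      rw [hv3, e3]
      calc (nbS H c' 3 x3).ncard ≤ _ := Set.ncard_le_ncard hsub (Set.toFinite _)
        _ ≤ 3 := h3
    by_cases hv4 : v = x4
    · have hsub : nbS H c' 4 x4 ⊆ nbS H c 4 x4 \ {x3} := by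
        rintro u ⟨hadj, hcu⟩
        have hu4 : u ≠ x4 := fun h => H.loopless.irrefl x4 (h ▸ hadj)
        have hu3 : u ≠ x3 := by rintro rfl; rw [e3] at hcu; omega
        have hu1 : u ≠ x1 := by rintro rfl; exact nadj14 (H.adj_symm hadj)
        have hu2 : u ≠ x2 := by rintro rfl; exact nadj24 (H.adj_symm hadj)
        rw [hne u hu1 hu2 hu3 hu4] at hcu
        exact ⟨⟨hadj, hcu⟩, hu3⟩
      rw [hv4, e4]
      calc (nbS H c' 4 x4).ncard ≤ _ := Set.ncard_le_ncard hsub (Set.toFinite _)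
        _ ≤ 4 := h4
    · -- unflipped vertex
      have hcv : c' v = c v := hne v hv1 hv2 hv3 hv4
      rcases hc.1 v with hv3c | hv4c
      · -- c v = 3 : possible gainers x1, x3
        by_cases hadj : H.Adj x1 v ∨ H.Adj x3 v
        · -- then v is small
          have hsm := r3 v hv1 hv2 hv3 hv4 hv3c hadj
          refine le_trans (nbS_ncard_le_degN H c' (c' v) v) ?_
          rw [hcv, hv3c]
          omega
        · push_neg at hadj
          refine hGen hc c' v hcv ?_
          intro u h1u h2u
          rw [hcv, hv3c] at h2u
          have hu1 : u ≠ x1 := by rintro rfl; exact hadj.1 (H.adj_symm h1u)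
          have hu3 : u ≠ x3 := by rintro rfl; exact hadj.2 (H.adj_symm h1u)
          have hu2 : u ≠ x2 := by rintro rfl; rw [e2] at h2u; omega
          have hu4 : u ≠ x4 := by rintro rfl; rw [e4] at h2u; omega
          rw [hne u hu1 hu2 hu3 hu4] at h2u
          omega
      · -- c v = 4 : possible gainers x2, x4
        by_cases hadj : H.Adj x2 v ∨ H.Adj x4 v
        · have hsm := r4 v hv1 hv2 hv3 hv4 hv4c hadj
          refine le_trans (nbS_ncard_le_degN H c' (c' v) v) ?_
          rw [hcv, hv4c]
          omega
        · push_neg at hadj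
          refine hGen hc c' v hcv ?_
          intro u h1u h2u
          rw [hcv, hv4c] at h2u
          have hu2 : u ≠ x2 := by rintro rfl; exact hadj.1 (H.adj_symm h1u)
          have hu4 : u ≠ x4 := by rintro rfl; exact hadj.2 (H.adj_symm h1u)
          have hu1 : u ≠ x1 := by rintro rfl; rw [e1] at h2u; omega
          have hu3 : u ≠ x3 := by rintro rfl; rw [e3] at h2u; omega
          rw [hne u hu1 hu2 hu3 hu4] at h2u
          omega
      
lemma two_big (G : SimpleGraph V) (x a b : V) (hab : a ≠ b)
    (ha : G.Adj x a) (hda : 3 ≤ degN G a) (hb : G.Adj x b) (hdb : 3 ≤ degN G b)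
    (ht : tpn G x ≤ 2) :
    ∀ w, G.Adj x w → 3 ≤ degN G w → (w = a ∨ w = b) := by
  have hsub : {a, b} ⊆ {w | G.Adj x w ∧ 3 ≤ degN G w} := by
    rintro y (rfl | rfl)
    · exact ⟨ha, hda⟩
    · exact ⟨hb, hdb⟩
  have heq : {a, b} = {w | G.Adj x w ∧ 3 ≤ degN G w} :=
    Set.eq_of_subset_of_ncard_le hsub (by
      show tpn G x ≤ _
      rw [Set.ncard_pair hab]; exact ht) (Set.toFinite _)
  intro w h1 h2
  have : w ∈ ({a, b} : Set V) := heq ▸ (⟨h1, h2⟩ : w ∈ {w | G.Adj x w ∧ 3 ≤ degN G w})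
  exact this

end Stmt18Aux2


open Stmt18Aux Stmt18Aux2 in
lemma stmt18_key {V : Type*} [Fintype V] (G : SimpleGraph V)
    (hNC : ¬ Colorable34 G) (hDel : ∀ v, Colorable34 (deleteVert G v))
    (htri : ∀ a b c : V, G.Adj a b → G.Adj b c → ¬ G.Adj c a)
    (u1 u2 u3 u4 u5 : V)
    (n12 : u1 ≠ u2) (n13 : u1 ≠ u3) (n14 : u1 ≠ u4) (n15 : u1 ≠ u5)
    (n23 : u2 ≠ u3) (n24 : u2 ≠ u4) (n25 : u2 ≠ u5)
    (n34 : u3 ≠ u4) (n35 : u3 ≠ u5) (n45 : u4 ≠ u5)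
    (a12 : G.Adj u1 u2) (a23 : G.Adj u2 u3) (a34 : G.Adj u3 u4)
    (a45 : G.Adj u4 u5) (a51 : G.Adj u5 u1)
    (d1 : degN G u1 = 2) (d2 : 3 ≤ degN G u2) (d3 : 3 ≤ degN G u3)
    (d4 : 3 ≤ degN G u4) (d5 : 3 ≤ degN G u5)
    (p2 : Is5p G u2 ∨ Is5s G u2 ∨ Is6p G u2)
    (p3 : Is5p G u3 ∨ Is5s G u3 ∨ Is6p G u3)
    (hB : (Is5p G u4 ∨ Is5s G u4 ∨ Is6p G u4) ∨
      ((Is5p G u5 ∨ Is5s G u5 ∨ Is6p G u5) ∧ degN G u4 ≤ 8 ∧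
        (7 ≤ degN G u4 → tpn G u4 ≤ 2))) :
    False := by
  classical
  set H := deleteVert G u1 with hH
  have hadjH : ∀ {x w : V}, G.Adj x w → x ≠ u1 → w ≠ u1 → H.Adj x w := by
    intro x w h hx hw; rw [hH]; exact ⟨h, hx, hw⟩
  have hadjG : ∀ {x w : V}, H.Adj x w → G.Adj x w := by
    intro x w h; rw [hH] at h; exact h.1
  have hadjN : ∀ {x w : V}, H.Adj x w → w ≠ u1 := by
    intro x w h; rw [hH] at h; exact h.2.2
  -- the neighborhood of u1
  have hN1 : {w | G.Adj u1 w} = {u2, u5} := by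
    refine (Set.eq_of_subset_of_ncard_le ?_ ?_ (Set.toFinite _)).symm
    · rintro w (rfl | rfl)
      · exact a12
      · exact a51.symm
    · rw [Set.ncard_pair n25]
      exact le_of_eq d1
  have memN1 : ∀ {w : V}, G.Adj u1 w → w = u2 ∨ w = u5 := by
    intro w h
    have : w ∈ ({u2, u5} : Set V) := hN1 ▸ (h : w ∈ {w | G.Adj u1 w})
    exact this
  -- girth facts
  have na25 : ¬ G.Adj u2 u5 := htri u5 u1 u2 a51 a12
  have na42 : ¬ G.Adj u4 u2 := htri u2 u3 u4 a23 a34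
  have na53 : ¬ G.Adj u5 u3 := htri u3 u4 u5 a34 a45
  have na13 : ¬ G.Adj u1 u3 := by
    intro h
    rcases memN1 h with h' | h'
    · exact n23 h'.symm
    · exact n35 h'
  have na14 : ¬ G.Adj u1 u4 := by
    intro h
    rcases memN1 h with h' | h'
    · exact n24 h'.symm
    · exact n45 h'
  -- H-adjacencies along the cycle
  have b23 : H.Adj u2 u3 := hadjH a23 n12.symm n13.symm
  have b32 : H.Adj u3 u2 := b23.symm
  have b34 : H.Adj u3 u4 := hadjH a34 n13.symm n14.symm
  have b43 : H.Adj u4 u3 := b34.symm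
  have b45 : H.Adj u4 u5 := hadjH a45 n14.symm n15.symm
  have b54 : H.Adj u5 u4 := b45.symm
  have nb24 : ¬ H.Adj u2 u4 := fun h => na42 (hadjG h).symm
  have nb25 : ¬ H.Adj u2 u5 := fun h => na25 (hadjG h)
  have nb35 : ¬ H.Adj u3 u5 := fun h => na53 (hadjG h).symm
  have nb22 : ¬ H.Adj u2 u2 := H.loopless.irrefl u2
  -- degrees in H
  have hHle : ∀ w, degN H w ≤ degN G w := by
    intro w
    exact Set.ncard_le_ncard (fun u hu => hadjG hu) (Set.toFinite _)
  have degH_eq : ∀ x, x ≠ u1 → ¬ G.Adj u1 x → degN H x = degN G x := by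
    intro x hx hnadj
    have hset : {w | H.Adj x w} = {w | G.Adj x w} := by
      ext w
      constructor
      · exact fun h => hadjG h
      · intro h
        refine hadjH h hx ?_
        rintro rfl
        exact hnadj h.symm
    show ({w | H.Adj x w}).ncard = _
    rw [hset]; rfl
  have degH3 : degN H u3 = degN G u3 := degH_eq u3 n13.symm na13
  have degH4 : degN H u4 = degN G u4 := degH_eq u4 n14.symm na14
  have degH_cyc : ∀ x, x ≠ u1 → G.Adj u1 x → degN H x = degN G x - 1 := by
    intro x hx hadj
    have hset : {w | H.Adj x w} = {w | G.Adj x w} \ {u1} := by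
      ext w
      constructor
      · intro h; exact ⟨hadjG h, hadjN h⟩
      · rintro ⟨h, hw⟩; exact hadjH h hx hw
    show ({w | H.Adj x w}).ncard = _
    rw [hset, Set.ncard_diff_singleton_of_mem (show u1 ∈ {w | G.Adj x w} from hadj.symm)]
    rfl
  have degH2 : degN H u2 = degN G u2 - 1 := degH_cyc u2 n12.symm a12
  have degH5 : degN H u5 = degN G u5 - 1 := degH_cyc u5 n15.symm a51.symm
  -- small vertices are never saturated
  have hsmall : ∀ (c : V → ℕ) (j : ℕ), 3 ≤ j → ∀ w, ¬ 3 ≤ degN G w →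
      (nbS H c j w).ncard < j := by
    intro c j hj w hw
    have h1 : (nbS H c j w).ncard ≤ degN H w := nbS_ncard_le_degN H c j w
    have h2 := hHle w
    omega
  -- L0 : basic structure of every coloring of H
  have L0 : ∀ c : V → ℕ, IsColoring34 H c →
      c u2 ≠ c u5 ∧ (nbS H c (c u2) u2).ncard = c u2 ∧
        (nbS H c (c u5) u5).ncard = c u5 := by
    intro c hc
    have hext : ∀ i : ℕ, i = 3 ∨ i = 4 →
        (c u2 = i → (nbS H c i u2).ncard < i) →
        (c u5 = i → (nbS H c i u5).ncard < i) → False := by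
      intro i hi h2 h5
      refine hNC ⟨Function.update c u1 i, ?_, ?_⟩
      · intro v
        by_cases hv : v = u1
        · rw [hv, Function.update_self]; exact hi
        · rw [Function.update_of_ne hv]; exact hc.1 v
      · intro v
        by_cases hv1 : v = u1
        · rw [hv1, Function.update_self]
          have hsub : {w | G.Adj u1 w ∧ Function.update c u1 i w = i} ⊆
              {w | G.Adj u1 w} := fun w hw => hw.1
          have h1 := Set.ncard_le_ncard hsub (Set.toFinite _)
          have hd : ({w | G.Adj u1 w}).ncard = 2 := d1
          omega
        · rw [Function.update_of_ne hv1]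
          have hcase : ∀ y, G.Adj u1 y → y ≠ u1 →
              (c y = i → (nbS H c i y).ncard < i) →
              {w | G.Adj y w ∧ Function.update c u1 i w = c y}.ncard ≤ c y := by
            intro y hy hyne hylt
            by_cases hci : c y = i
            · have hsub : {w | G.Adj y w ∧ Function.update c u1 i w = c y} ⊆
                  insert u1 (nbS H c (c y) y) := by
                rintro w ⟨hadj, hcw⟩
                by_cases hw1 : w = u1
                · rw [hw1]; exact Set.mem_insert _ _
                · refine Set.mem_insert_of_mem _ ⟨hadjH hadj hyne hw1, ?_⟩
                  rwa [Function.update_of_ne hw1] at hcw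
              have h1 := Set.ncard_le_ncard hsub (Set.toFinite _)
              have h2' := Set.ncard_insert_le u1 (nbS H c (c y) y)
              have h3' : (nbS H c (c y) y).ncard < c y := by
                rw [hci]; exact hylt hci
              omega
            · have hsub : {w | G.Adj y w ∧ Function.update c u1 i w = c y} ⊆
                  nbS H c (c y) y := by
                rintro w ⟨hadj, hcw⟩
                have hw1 : w ≠ u1 := by
                  rintro rfl
                  rw [Function.update_self] at hcw
                  exact hci hcw.symm
                exact ⟨hadjH hadj hyne hw1, by rwa [Function.update_of_ne hw1] at hcw⟩
              exact le_trans (Set.ncard_le_ncard hsub (Set.toFinite _)) (hc.2 y)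
          by_cases hv2 : v = u2
          · rw [hv2]; exact hcase u2 a12 n12.symm h2
          by_cases hv5 : v = u5
          · rw [hv5]; exact hcase u5 a51.symm n15.symm h5
          · have hset : {w | G.Adj v w ∧ Function.update c u1 i w = c v} =
                nbS H c (c v) v := by
              ext w
              constructor
              · rintro ⟨hadj, hcw⟩
                have hw1 : w ≠ u1 := by
                  rintro rfl
                  rcases memN1 hadj.symm with h | h
                  · exact hv2 h
                  · exact hv5 h
                exact ⟨hadjH hadj hv1 hw1, by rwa [Function.update_of_ne hw1] at hcw⟩
              · rintro ⟨hadj, hcw⟩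
                exact ⟨hadjG hadj, by rwa [Function.update_of_ne (hadjN hadj)]⟩
            rw [hset]
            exact hc.2 v
    have hne : c u2 ≠ c u5 := by
      intro h25
      refine hext (7 - c u2) ?_ ?_ ?_
      · rcases hc.1 u2 with h | h <;> omega
      · intro h; exfalso; rcases hc.1 u2 with h' | h' <;> omega
      · intro h; exfalso; rcases hc.1 u2 with h' | h' <;> omega
    have hs2 : (nbS H c (c u2) u2).ncard = c u2 := by
      by_contra hs
      exact hext (c u2) (hc.1 u2) (fun _ => lt_of_le_of_ne (hc.2 u2) hs)
        (fun h => absurd h.symm hne)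
    have hs5 : (nbS H c (c u5) u5).ncard = c u5 := by
      by_contra hs
      exact hext (c u5) (hc.1 u5) (fun h => absurd h hne)
        (fun _ => lt_of_le_of_ne (hc.2 u5) hs)
    exact ⟨hne, hs2, hs5⟩
  -- structure of u3 (5s) and u2 (poorish)
  obtain ⟨hd3e, hcls3⟩ := semi_struct G u3 u2 u4 p3 n24 a23.symm d2 a34 d4
  obtain ⟨hdeg2or, z2, hz2alt, hcls2⟩ := poor_struct G u2 u3 p2 a23 d3
  -- the coloring of G - u1
  obtain ⟨c, hc0⟩ := hDel u1
  have hc : IsColoring34 H c := hc0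
  obtain ⟨hne25c, hsat2, hsat5⟩ := L0 c hc
  have hv2c : c u2 = 3 ∨ c u2 = 4 := hc.1 u2
  have hc5 : c u5 = 7 - c u2 := by
    rcases hc.1 u5 with h | h <;> rcases hv2c with h' | h' <;> omega
  have hpart : ∀ x, (nbS H c 3 x).ncard + (nbS H c 4 x).ncard = degN H x :=
    nbS_partition H hc.1
  rcases hB with p4 | ⟨p5, hd4le, ht4le⟩
  · -- CASE A : u4 is semi-poor
    obtain ⟨hd4e, hcls4⟩ := semi_struct G u4 u3 u5 p4 n35 a34.symm d3 a45 d5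
    by_cases hc3 : c u3 = c u2
    · -- c u3 = c u2
      by_cases hc4 : c u4 = c u2
      · -- A2a
        have hj34 : 7 - c u2 = 3 ∨ 7 - c u2 = 4 := by rcases hv2c with h | h <;> omega
        have hjne : (7 - c u2) ≠ c u2 := by rcases hv2c with h | h <;> omega
        have hsub1 : nbS H c (7 - c u2) u3 ⊆ {w | H.Adj u3 w} \ {u2, u4} := by
          rintro w ⟨hadj, hcw⟩
          refine ⟨hadj, fun hmem => ?_⟩
          rcases hmem with rfl | rfl
          · omega
          · omega
        have hpairsub : {u2, u4} ⊆ {w | H.Adj u3 w} := by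
          rintro w (rfl | rfl)
          · exact b32
          · exact b34
        have h1b : (nbS H c (7 - c u2) u3).ncard ≤ 7 - c u2 := by
          have hs := Set.ncard_le_ncard hsub1 (Set.toFinite _)
          rw [Set.ncard_diff hpairsub, Set.ncard_pair n24] at hs
          have hd35 : degN H u3 = 5 := by rw [degH3, hd3e]
          have hdd : ({w | H.Adj u3 w}).ncard = degN H u3 := rfl
          rcases hv2c with h | h <;> omega
        have hflip := flip1 hc u3 (7 - c u2) hj34 h1b
          (by
            intro w hadj hcw
            by_cases hwbig : 3 ≤ degN G w
            · exfalso
              rcases hcls3 w (hadjG hadj) hwbig with h | h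
              · rw [h] at hcw; omega
              · rw [h] at hcw; omega
            · exact hsmall c _ (by rcases hv2c with h | h <;> omega) w hwbig)
        have hL := (L0 _ hflip).2.1
        rw [Function.update_of_ne n23] at hL
        rw [nbS_update_ne H c hjne u3 u2] at hL
        rw [Set.ncard_diff_singleton_of_mem
          (show u3 ∈ nbS H c (c u2) u2 from ⟨b23, hc3⟩)] at hL
        rcases hv2c with h | h <;> omega
      · -- A2b
        have hc4' : c u4 = 7 - c u2 := by
          rcases hc.1 u4 with h | h <;> rcases hv2c with h' | h' <;> omega
        have hj34 : 7 - c u2 = 3 ∨ 7 - c u2 = 4 := by rcases hv2c with h | h <;> omega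
        have hjne : (7 - c u2) ≠ c u2 := by rcases hv2c with h | h <;> omega
        have hsubx : nbS H c (7 - c u2) u3 \ {u4} ⊆ {w | H.Adj u3 w} \ {u2, u4} := by
          rintro w ⟨⟨hadj, hcw⟩, hwu4⟩
          refine ⟨hadj, fun hmem => ?_⟩
          rcases hmem with rfl | rfl
          · omega
          · exact hwu4 rfl
        have hpairsub3 : {u2, u4} ⊆ {w | H.Adj u3 w} := by
          rintro w (rfl | rfl)
          · exact b32
          · exact b34
        have hx1 : (nbS H c (7 - c u2) u3 \ {u4}).ncard ≤ 7 - c u2 := by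
          have hs := Set.ncard_le_ncard hsubx (Set.toFinite _)
          rw [Set.ncard_diff hpairsub3, Set.ncard_pair n24] at hs
          have hd35 : degN H u3 = 5 := by rw [degH3, hd3e]
          have hdd : ({w | H.Adj u3 w}).ncard = degN H u3 := rfl
          rcases hv2c with h | h <;> omega
        have hsuby : nbS H c (c u2) u4 \ {u3} ⊆ {w | H.Adj u4 w} \ {u5, u3} := by
          rintro w ⟨⟨hadj, hcw⟩, hwu3⟩
          refine ⟨hadj, fun hmem => ?_⟩
          rcases hmem with rfl | rfl
          · omega
          · exact hwu3 rfl
        have hpairsub4 : {u5, u3} ⊆ {w | H.Adj u4 w} := by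
          rintro w (rfl | rfl)
          · exact b45
          · exact b43
        have hy1 : (nbS H c (c u2) u4 \ {u3}).ncard ≤ c u2 := by
          have hs := Set.ncard_le_ncard hsuby (Set.toFinite _)
          rw [Set.ncard_diff hpairsub4, Set.ncard_pair (Ne.symm n35)] at hs
          have hd45 : degN H u4 = 5 := by rw [degH4, hd4e]
          have hdd : ({w | H.Adj u4 w}).ncard = degN H u4 := rfl
          rcases hv2c with h | h <;> omega
        have hflip := flip2 hc u3 u4 (7 - c u2) (c u2) hj34 hv2c hjne n34 hx1 hy1
          (by
            intro w hadj hwne hcw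
            by_cases hwbig : 3 ≤ degN G w
            · exfalso
              rcases hcls3 w (hadjG hadj) hwbig with h | h
              · rw [h] at hcw; omega
              · exact hwne h
            · exact hsmall c _ (by rcases hv2c with h | h <;> omega) w hwbig)
          (by
            intro w hadj hwne hcw
            by_cases hwbig : 3 ≤ degN G w
            · exfalso
              rcases hcls4 w (hadjG hadj) hwbig with h | h
              · exact hwne h
              · rw [h] at hcw; omega
            · exact hsmall c _ (by rcases hv2c with h | h <;> omega) w hwbig)
        have hL := (L0 _ hflip).2.1
        rw [Function.update_of_ne n24, Function.update_of_ne n23] at hL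
        rw [nbS_update_nadj H _ (c u2) (c u2) nb24] at hL
        rw [nbS_update_ne H c hjne u3 u2] at hL
        rw [Set.ncard_diff_singleton_of_mem
          (show u3 ∈ nbS H c (c u2) u2 from ⟨b23, hc3⟩)] at hL
        rcases hv2c with h | h <;> omega
    · -- c u3 = 7 - c u2
      have hc3' : c u3 = 7 - c u2 := by
        rcases hc.1 u3 with h | h <;> rcases hv2c with h' | h' <;> omega
      by_cases hsat3 : (nbS H c (7 - c u2) u3).ncard = 7 - c u2
      · rcases hv2c with hα3 | hα4
        · -- A1b-i
          rw [hα3] at hsat2 hsat3 hc3' hc5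
          norm_num at hsat3 hc3' hc5
          have hsub : nbS H c 4 u3 ⊆ {w | H.Adj u3 w} \ {u2} := by
            rintro w ⟨hadj, hcw⟩
            refine ⟨hadj, fun hmem => ?_⟩
            have hw : w = u2 := hmem
            rw [hw] at hcw
            omega
          have hcard : ({w | H.Adj u3 w} \ {u2}).ncard = degN H u3 - 1 :=
            Set.ncard_diff_singleton_of_mem (show u2 ∈ {w | H.Adj u3 w} from b32)
          have hd35 : degN H u3 = 5 := by rw [degH3, hd3e]
          have heq : nbS H c 4 u3 = {w | H.Adj u3 w} \ {u2} :=
            Set.eq_of_subset_of_ncard_le hsub (by rw [hcard]; omega) (Set.toFinite _)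
          have hmem4 : u4 ∈ nbS H c 4 u3 := by
            rw [heq]
            exact ⟨b34, fun hmem => n24 (Eq.symm hmem)⟩
          have hc44 : c u4 = 4 := hmem4.2
          have hsub4 : nbS H c 3 u4 ⊆ {w | H.Adj u4 w} \ {u3, u5} := by
            rintro w ⟨hadj, hcw⟩
            refine ⟨hadj, fun hmem => ?_⟩
            rcases hmem with rfl | rfl
            · omega
            · omega
          have hpair45 : {u3, u5} ⊆ {w | H.Adj u4 w} := by
            rintro w (rfl | rfl)
            · exact b43
            · exact b45
          have h1b : (nbS H c 3 u4).ncard ≤ 3 := by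
            have hs := Set.ncard_le_ncard hsub4 (Set.toFinite _)
            rw [Set.ncard_diff hpair45, Set.ncard_pair n35] at hs
            have hd45 : degN H u4 = 5 := by rw [degH4, hd4e]
            have hdd : ({w | H.Adj u4 w}).ncard = degN H u4 := rfl
            omega
          have hflip := flip1 hc u4 3 (Or.inl rfl) h1b
            (by
              intro w hadj hcw
              by_cases hwbig : 3 ≤ degN G w
              · exfalso
                rcases hcls4 w (hadjG hadj) hwbig with h | h
                · rw [h] at hcw; omega
                · rw [h] at hcw; omega
              · exact hsmall c 3 (by norm_num) w hwbig)
          have hL := (L0 _ hflip).2.2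
          rw [Function.update_of_ne (Ne.symm n45), hc5] at hL
          rw [nbS_update_ne H c (by norm_num : (3 : ℕ) ≠ 4) u4 u5] at hL
          rw [Set.ncard_diff_singleton_of_mem
            (show u4 ∈ nbS H c 4 u5 from ⟨b54, hc44⟩)] at hL
          rw [hc5] at hsat5
          omega
        · -- A1b-ii
          rw [hα4] at hsat2 hsat3 hc3' hc5
          norm_num at hsat3 hc3' hc5
          have hsub : nbS H c 4 u2 ⊆ {w | H.Adj u2 w} \ {u3} := by
            rintro w ⟨hadj, hcw⟩
            refine ⟨hadj, fun hmem => ?_⟩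
            have hw : w = u3 := hmem
            rw [hw] at hcw
            omega
          have hcard : ({w | H.Adj u2 w} \ {u3}).ncard = degN H u2 - 1 :=
            Set.ncard_diff_singleton_of_mem (show u3 ∈ {w | H.Adj u2 w} from b23)
          have hd2e6 : degN G u2 = 6 := by
            have hs := Set.ncard_le_ncard hsub (Set.toFinite _)
            rw [hcard] at hs
            rcases hdeg2or with h | h <;> omega
          have hcard3 : (nbS H c 3 u2).ncard = 1 := by
            have := hpart u2
            omega
          have hd35 : degN H u3 = 5 := by rw [degH3, hd3e]
          have hp3' := hpart u3
          have hflip := flip2 hc u2 u3 3 4 (Or.inl rfl) (Or.inr rfl) (by norm_num) n23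
            (le_trans (Set.ncard_le_ncard Set.diff_subset (Set.toFinite _)) (by omega))
            (le_trans (Set.ncard_le_ncard Set.diff_subset (Set.toFinite _)) (by omega))
            (by
              intro w hadj hwne hcw
              by_cases hwbig : 3 ≤ degN G w
              · exfalso
                rcases hcls2 w (hadjG hadj) hwbig with h | h
                · exact hwne h
                · rcases hz2alt with h3 | ⟨_, _, _, h5⟩
                  · exact hwne (h.trans h3)
                  · omega
              · exact hsmall c 3 (by norm_num) w hwbig)
            (by
              intro w hadj hwne hcw
              by_cases hwbig : 3 ≤ degN G w
              · rcases hcls3 w (hadjG hadj) hwbig with h | h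
                · exact absurd h hwne
                · rw [h] at hcw ⊢
                  have hsub4 : nbS H c 4 u4 ⊆ {w | H.Adj u4 w} \ {u3, u5} := by
                    rintro w' ⟨hadj', hcw'⟩
                    refine ⟨hadj', fun hmem => ?_⟩
                    rcases hmem with rfl | rfl
                    · omega
                    · omega
                  have hs := Set.ncard_le_ncard hsub4 (Set.toFinite _)
                  have hpair45 : {u3, u5} ⊆ {w | H.Adj u4 w} := by
                    rintro w' (rfl | rfl)
                    · exact b43
                    · exact b45
                  rw [Set.ncard_diff hpair45, Set.ncard_pair n35] at hs
                  have hd45 : degN H u4 = 5 := by rw [degH4, hd4e]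
                  have hdd : ({w | H.Adj u4 w}).ncard = degN H u4 := rfl
                  omega
              · exact hsmall c 4 (by norm_num) w hwbig)
          have hL := (L0 _ hflip).1
          apply hL
          rw [Function.update_of_ne n23, Function.update_self,
            Function.update_of_ne (Ne.symm n35), Function.update_of_ne (Ne.symm n25), hc5]
      · -- A1a
        have hj34 : 7 - c u2 = 3 ∨ 7 - c u2 = 4 := by rcases hv2c with h | h <;> omega
        have hcnt : (nbS H c (7 - c u2) u2).ncard + c u2 = degN H u2 := by
          have hp := hpart u2
          rcases hv2c with h | h <;> rw [h] at hsat2 ⊢ <;> norm_num <;> omega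
        have h1b : (nbS H c (7 - c u2) u2).ncard ≤ 7 - c u2 := by
          have h2d : degN H u2 = degN G u2 - 1 := degH2
          rcases hdeg2or with h | h <;> rcases hv2c with h' | h' <;> omega
        have hflip := flip1 hc u2 (7 - c u2) hj34 h1b
          (by
            intro w hadj hcw
            by_cases hwbig : 3 ≤ degN G w
            · rcases hcls2 w (hadjG hadj) hwbig with h | h
              · rw [h]
                exact lt_of_le_of_ne (by rw [← hc3']; exact hc.2 u3) hsat3
              · rw [h] at hcw ⊢
                rcases hz2alt with heq3 | ⟨haz, hdz, hzne3, hd2e5⟩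
                · rw [heq3] at hcw ⊢
                  exact lt_of_le_of_ne (by rw [← hc3']; exact hc.2 u3) hsat3
                · exfalso
                  have hz2ne1 : z2 ≠ u1 := by
                    intro h
                    rw [h] at hdz
                    omega
                  have hz2H : H.Adj u2 z2 := hadjH haz n12.symm hz2ne1
                  have hsub : nbS H c (c u2) u2 ⊆ {w | H.Adj u2 w} \ {u3} := by
                    rintro w' ⟨hadj', hcw'⟩
                    refine ⟨hadj', fun hmem => ?_⟩
                    have hw : w' = u3 := hmem
                    rw [hw] at hcw'
                    rcases hv2c with h | h <;> omega
                  have hcard : ({w | H.Adj u2 w} \ {u3}).ncard = degN H u2 - 1 :=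
                    Set.ncard_diff_singleton_of_mem (show u3 ∈ {w | H.Adj u2 w} from b23)
                  have h2d : degN H u2 = degN G u2 - 1 := degH2
                  have heq : nbS H c (c u2) u2 = {w | H.Adj u2 w} \ {u3} := by
                    refine Set.eq_of_subset_of_ncard_le hsub ?_ (Set.toFinite _)
                    rw [hcard]
                    rcases hv2c with h | h <;> omega
                  have hz2mem : z2 ∈ nbS H c (c u2) u2 := by
                    rw [heq]
                    exact ⟨hz2H, fun hmem => hzne3 hmem⟩
                  have hz2col := hz2mem.2
                  rcases hv2c with h | h <;> omega
            · exact hsmall c _ (by rcases hv2c with h | h <;> omega) w hwbig)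
        have hL := (L0 _ hflip).1
        apply hL
        rw [Function.update_self, Function.update_of_ne (Ne.symm n25), hc5]
  · -- CASE B : u5 poorish, u4 bounded
    obtain ⟨hdeg5or, z5, hz5alt, hcls5⟩ := poor_struct G u5 u4 p5 a45.symm d4
    rcases hv2c with hα3 | hα4
    · -- B-α3 : c u2 = 3, c u5 = 4
      rw [hα3] at hsat2 hc5
      norm_num at hc5
      rw [hc5] at hsat5
      by_cases hd5e : degN G u5 = 5
      · -- B3'a
        have hp5 := hpart u5
        have hd5H : degN H u5 = degN G u5 - 1 := degH5
        have h30 : (nbS H c 3 u5).ncard = 0 := by omega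
        have hempty : nbS H c 3 u5 = ∅ := (Set.ncard_eq_zero (Set.toFinite _)).mp h30
        have hflip := flip1 hc u5 3 (Or.inl rfl) (by omega)
          (by
            intro w hadj hcw
            exfalso
            have hmem : w ∈ nbS H c 3 u5 := ⟨hadj, hcw⟩
            rw [hempty] at hmem
            exact hmem)
        have hL := (L0 _ hflip).1
        apply hL
        rw [Function.update_of_ne n25, Function.update_self, hα3]
      · have hd5e6 : degN G u5 = 6 := by rcases hdeg5or with h | h <;> omega
        have hz5u4 : z5 = u4 := by
          rcases hz5alt with h | ⟨_, _, _, h5⟩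
          · exact h
          · omega
        -- a flip of u5 to 3 works whenever u4 does not block
        have hflipu5 : (c u4 = 3 → (nbS H c 3 u4).ncard < 3) → False := by
          intro hjust
          have hp5 := hpart u5
          have hd5H : degN H u5 = degN G u5 - 1 := degH5
          have h1b : (nbS H c 3 u5).ncard ≤ 3 := by omega
          have hflip := flip1 hc u5 3 (Or.inl rfl) h1b
            (by
              intro w hadj hcw
              by_cases hwbig : 3 ≤ degN G w
              · rcases hcls5 w (hadjG hadj) hwbig with h | h
                · rw [h] at hcw ⊢
                  exact hjust hcw
                · rw [h, hz5u4] at hcw ⊢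
                  exact hjust hcw
              · exact hsmall c 3 (by norm_num) w hwbig)
          have hL := (L0 _ hflip).1
          apply hL
          rw [Function.update_of_ne n25, Function.update_self, hα3]
        by_cases hc4v3 : c u4 = 3
        · by_cases hsat4 : (nbS H c 3 u4).ncard = 3
          · by_cases hc3v : c u3 = 3
            · -- B3'b2a
              have hsub : nbS H c 4 u3 ⊆ {w | H.Adj u3 w} \ {u2, u4} := by
                rintro w ⟨hadj, hcw⟩
                refine ⟨hadj, fun hmem => ?_⟩
                rcases hmem with rfl | rfl
                · omega
                · omega
              have hpair : {u2, u4} ⊆ {w | H.Adj u3 w} := by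
                rintro w (rfl | rfl)
                · exact b32
                · exact b34
              have h1b : (nbS H c 4 u3).ncard ≤ 4 := by
                have hs := Set.ncard_le_ncard hsub (Set.toFinite _)
                rw [Set.ncard_diff hpair, Set.ncard_pair n24] at hs
                have hd35 : degN H u3 = 5 := by rw [degH3, hd3e]
                have hdd : ({w | H.Adj u3 w}).ncard = degN H u3 := rfl
                omega
              have hflip := flip1 hc u3 4 (Or.inr rfl) h1b
                (by
                  intro w hadj hcw
                  by_cases hwbig : 3 ≤ degN G w
                  · exfalso
                    rcases hcls3 w (hadjG hadj) hwbig with h | h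
                    · rw [h] at hcw; omega
                    · rw [h] at hcw; omega
                  · exact hsmall c 4 (by norm_num) w hwbig)
              have hL := (L0 _ hflip).2.1
              rw [Function.update_of_ne n23, hα3] at hL
              rw [nbS_update_ne H c (by norm_num : (4 : ℕ) ≠ 3) u3 u2] at hL
              rw [Set.ncard_diff_singleton_of_mem
                (show u3 ∈ nbS H c 3 u2 from ⟨b23, hc3v⟩)] at hL
              omega
            · -- B3'b2b
              have hc3v4 : c u3 = 4 := by rcases hc.1 u3 with h | h <;> omega
              have hp2 := hpart u2
              have hd2H : degN H u2 = degN G u2 - 1 := degH2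
              have h1b : (nbS H c 4 u2).ncard ≤ 4 := by
                rcases hdeg2or with h | h <;> omega
              have hu3case : (nbS H c 4 u3).ncard < 4 := by
                have hsub : nbS H c 4 u3 ⊆ {w | H.Adj u3 w} \ {u2, u4} := by
                  rintro w' ⟨hadj', hcw'⟩
                  refine ⟨hadj', fun hmem => ?_⟩
                  rcases hmem with rfl | rfl
                  · omega
                  · omega
                have hpair : {u2, u4} ⊆ {w | H.Adj u3 w} := by
                  rintro w' (rfl | rfl)
                  · exact b32
                  · exact b34
                have hs := Set.ncard_le_ncard hsub (Set.toFinite _)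
                rw [Set.ncard_diff hpair, Set.ncard_pair n24] at hs
                have hd35 : degN H u3 = 5 := by rw [degH3, hd3e]
                have hdd : ({w | H.Adj u3 w}).ncard = degN H u3 := rfl
                omega
              have hflip := flip1 hc u2 4 (Or.inr rfl) h1b
                (by
                  intro w hadj hcw
                  by_cases hwbig : 3 ≤ degN G w
                  · rcases hcls2 w (hadjG hadj) hwbig with h | h
                    · rw [h]
                      exact hu3case
                    · rw [h] at hcw ⊢
                      rcases hz2alt with heq3 | ⟨haz, hdz, hzne3, hd2e5⟩
                      · rw [heq3]
                        exact hu3case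
                      · exfalso
                        have hz2ne1 : z2 ≠ u1 := by
                          intro h
                          rw [h] at hdz
                          omega
                        have hz2H : H.Adj u2 z2 := hadjH haz n12.symm hz2ne1
                        have hsub : nbS H c 3 u2 ⊆ {w | H.Adj u2 w} \ {u3} := by
                          rintro w' ⟨hadj', hcw'⟩
                          refine ⟨hadj', fun hmem => ?_⟩
                          have hw : w' = u3 := hmem
                          rw [hw] at hcw'
                          omega
                        have hcard : ({w | H.Adj u2 w} \ {u3}).ncard = degN H u2 - 1 :=
                          Set.ncard_diff_singleton_of_mem
                            (show u3 ∈ {w | H.Adj u2 w} from b23)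
                        have heq : nbS H c 3 u2 = {w | H.Adj u2 w} \ {u3} := by
                          refine Set.eq_of_subset_of_ncard_le hsub ?_ (Set.toFinite _)
                          rw [hcard]
                          omega
                        have hz2mem : z2 ∈ nbS H c 3 u2 := by
                          rw [heq]
                          exact ⟨hz2H, fun hmem => hzne3 hmem⟩
                        have hz2col := hz2mem.2
                        omega
                  · exact hsmall c 4 (by norm_num) w hwbig)
              have hL := (L0 _ hflip).1
              apply hL
              rw [Function.update_self, Function.update_of_ne (Ne.symm n25), hc5]
          · exact hflipu5 (fun _ => lt_of_le_of_ne (by rw [← hc4v3]; exact hc.2 u4) hsat4)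
        · exact hflipu5 (fun h => absurd h hc4v3)
    · -- B-α4 : c u2 = 4, c u5 = 3
      rw [hα4] at hsat2 hc5
      norm_num at hc5
      rw [hc5] at hsat5
      by_cases hd2e5 : degN G u2 = 5
      · -- B4a
        have hp2 := hpart u2
        have hd2H : degN H u2 = degN G u2 - 1 := degH2
        have h30 : (nbS H c 3 u2).ncard = 0 := by omega
        have hempty : nbS H c 3 u2 = ∅ := (Set.ncard_eq_zero (Set.toFinite _)).mp h30
        have hflip := flip1 hc u2 3 (Or.inl rfl) (by omega)
          (by
            intro w hadj hcw
            exfalso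
            have hmem : w ∈ nbS H c 3 u2 := ⟨hadj, hcw⟩
            rw [hempty] at hmem
            exact hmem)
        have hL := (L0 _ hflip).1
        apply hL
        rw [Function.update_self, Function.update_of_ne (Ne.symm n25), hc5]
      · have hd2e6 : degN G u2 = 6 := by rcases hdeg2or with h | h <;> omega
        have hz2u3 : z2 = u3 := by
          rcases hz2alt with h | ⟨_, _, _, h5⟩
          · exact h
          · omega
        have hcard3 : (nbS H c 3 u2).ncard = 1 := by
          have := hpart u2
          omega
        -- a flip of u2 to 3 works whenever u3 does not block
        have hflipu2 : (c u3 = 3 → (nbS H c 3 u3).ncard < 3) → False := by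
          intro hjust
          have hflip := flip1 hc u2 3 (Or.inl rfl) (by omega)
            (by
              intro w hadj hcw
              by_cases hwbig : 3 ≤ degN G w
              · rcases hcls2 w (hadjG hadj) hwbig with h | h
                · rw [h] at hcw ⊢
                  exact hjust hcw
                · rw [h, hz2u3] at hcw ⊢
                  exact hjust hcw
              · exact hsmall c 3 (by norm_num) w hwbig)
          have hL := (L0 _ hflip).1
          apply hL
          rw [Function.update_self, Function.update_of_ne (Ne.symm n25), hc5]
        by_cases hc3v : c u3 = 3
        · by_cases hsat3 : (nbS H c 3 u3).ncard = 3
          · have hA3 : nbS H c 3 u2 = {u3} := by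
              refine (Set.eq_of_subset_of_ncard_le ?_ ?_ (Set.toFinite _)).symm
              · exact Set.singleton_subset_iff.mpr ⟨b23, hc3v⟩
              · rw [Set.ncard_singleton]; omega
            -- flip2 of u2→3, u3→4 works whenever u4 does not block
            have hflip23 : (c u4 = 4 → (nbS H c 4 u4).ncard < 4) → False := by
              intro hjust
              have hd35 : degN H u3 = 5 := by rw [degH3, hd3e]
              have hp3' := hpart u3
              have hflip := flip2 hc u2 u3 3 4 (Or.inl rfl) (Or.inr rfl) (by norm_num) n23
                (le_trans (Set.ncard_le_ncard Set.diff_subset (Set.toFinite _)) (by omega))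
                (le_trans (Set.ncard_le_ncard Set.diff_subset (Set.toFinite _)) (by omega))
                (by
                  intro w hadj hwne hcw
                  by_cases hwbig : 3 ≤ degN G w
                  · exfalso
                    rcases hcls2 w (hadjG hadj) hwbig with h | h
                    · exact hwne h
                    · exact hwne (h.trans hz2u3)
                  · exact hsmall c 3 (by norm_num) w hwbig)
                (by
                  intro w hadj hwne hcw
                  by_cases hwbig : 3 ≤ degN G w
                  · rcases hcls3 w (hadjG hadj) hwbig with h | h
                    · exact absurd h hwne
                    · rw [h] at hcw ⊢
                      exact hjust hcw
                  · exact hsmall c 4 (by norm_num) w hwbig)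
              have hL := (L0 _ hflip).1
              apply hL
              rw [Function.update_of_ne n23, Function.update_self,
                Function.update_of_ne (Ne.symm n35), Function.update_of_ne (Ne.symm n25), hc5]
            by_cases hc44 : c u4 = 4
            · by_cases hsat44 : (nbS H c 4 u4).ncard = 4
              · -- B4b3c : the four-flip
                have hd35 : degN H u3 = 5 := by rw [degH3, hd3e]
                have hd4H : degN H u4 = degN G u4 := degH4
                have hd5H : degN H u5 = degN G u5 - 1 := degH5
                have hp3' := hpart u3
                have hp4' := hpart u4
                have hp5' := hpart u5
                have u4fact : ∀ w, H.Adj u4 w → c w = 3 → w = u3 ∨ w = u5 ∨ degN H w ≤ 2 := by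
                  intro w hadj hcw
                  by_cases hwbig : 3 ≤ degN G w
                  · by_cases h7 : 7 ≤ degN G u4
                    · rcases two_big G u4 u3 u5 n35 a34.symm d3 a45 d5 (ht4le h7) w
                        (hadjG hadj) hwbig with h | h
                      · exact Or.inl h
                      · exact Or.inr (Or.inl h)
                    · have hpairsub : {u3, u5} ⊆ nbS H c 3 u4 := by
                        rintro w' (rfl | rfl)
                        · exact ⟨b43, hc3v⟩
                        · exact ⟨b45, hc5⟩
                      have heq : {u3, u5} = nbS H c 3 u4 := by
                        refine Set.eq_of_subset_of_ncard_le hpairsub ?_ (Set.toFinite _)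
                        rw [Set.ncard_pair n35]
                        omega
                      have hmem : w ∈ ({u3, u5} : Set V) := by
                        rw [heq]
                        exact ⟨hadj, hcw⟩
                      rcases hmem with h | h
                      · exact Or.inl h
                      · exact Or.inr (Or.inl h)
                  · exact Or.inr (Or.inr (le_trans (hHle w) (by omega)))
                have hz5c : ∀ w, H.Adj u5 w → 3 ≤ degN G w → w ≠ u4 → c w = 3 := by
                  intro w hadj hwbig hwne
                  rcases hcls5 w (hadjG hadj) hwbig with h | h
                  · exact absurd h hwne
                  · rw [h]
                    rcases hz5alt with h4 | ⟨haz, hdz, hzne4, hd5e5⟩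
                    · exact absurd (h.trans h4) hwne
                    · have hz5ne1 : z5 ≠ u1 := by
                        intro h
                        rw [h] at hdz
                        omega
                      have hsub : nbS H c 3 u5 ⊆ {w | H.Adj u5 w} \ {u4} := by
                        rintro w' ⟨hadj', hcw'⟩
                        refine ⟨hadj', fun hmem => ?_⟩
                        have hw : w' = u4 := hmem
                        rw [hw] at hcw'
                        omega
                      have hcard : ({w | H.Adj u5 w} \ {u4}).ncard = degN H u5 - 1 :=
                        Set.ncard_diff_singleton_of_mem (show u4 ∈ {w | H.Adj u5 w} from b54)
                      have heq : nbS H c 3 u5 = {w | H.Adj u5 w} \ {u4} := by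
                        refine Set.eq_of_subset_of_ncard_le hsub ?_ (Set.toFinite _)
                        rw [hcard]
                        omega
                      have hmem : z5 ∈ nbS H c 3 u5 := by
                        rw [heq]
                        exact ⟨hadjH haz n15.symm hz5ne1, fun hmem => hzne4 hmem⟩
                      exact hmem.2
                have hcard43 : (nbS H c 4 u3).ncard = 2 := by omega
                have hflip := flip4 hc u2 u3 u4 u5 b23 b34 b45 nb24 nb25 nb35 n24 n25 n35
                  hα4 hc3v hc44 hc5
                  (le_trans (Set.ncard_le_ncard Set.diff_subset (Set.toFinite _)) (by omega))
                  (le_trans (Set.ncard_le_ncard Set.diff_subset (Set.toFinite _)) (by omega))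
                  (by
                    have hpairsub : {u3, u5} ⊆ nbS H c 3 u4 := by
                      rintro w' (rfl | rfl)
                      · exact ⟨b43, hc3v⟩
                      · exact ⟨b45, hc5⟩
                    rw [Set.ncard_diff hpairsub, Set.ncard_pair n35]
                    omega)
                  (le_trans (Set.ncard_le_ncard Set.diff_subset (Set.toFinite _)) (by omega))
                  (by
                    intro w hw1 hw2 hw3 hw4 hcw hadj
                    rcases hadj with hadj | hadj
                    · exfalso
                      have hmem : w ∈ nbS H c 3 u2 := ⟨hadj, hcw⟩
                      rw [hA3] at hmem
                      exact hw2 hmem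
                    · rcases u4fact w hadj hcw with h | h | h
                      · exact absurd h hw2
                      · exact absurd h hw4
                      · exact h)
                  (by
                    intro w hw1 hw2 hw3 hw4 hcw hadj
                    by_cases hwbig : 3 ≤ degN G w
                    · exfalso
                      rcases hadj with hadj | hadj
                      · rcases hcls3 w (hadjG hadj) hwbig with h | h
                        · exact hw1 h
                        · exact hw3 h
                      · have := hz5c w hadj hwbig hw3
                        omega
                    · exact le_trans (hHle w) (by omega))
                have hL := (L0 _ hflip).2.1
                have e2v : (Function.update (Function.update (Function.update
                    (Function.update c u2 3) u3 4) u4 3) u5 4) u2 = 3 := by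
                  rw [Function.update_of_ne n25, Function.update_of_ne n24,
                    Function.update_of_ne n23, Function.update_self]
                rw [e2v] at hL
                rw [nbS_update_ne H _ (by norm_num : (4 : ℕ) ≠ 3) u5 u2] at hL
                rw [nbS_update_nadj H _ 3 3 nb24] at hL
                rw [nbS_update_ne H _ (by norm_num : (4 : ℕ) ≠ 3) u3 u2] at hL
                rw [nbS_update_nadj H _ 3 3 nb22] at hL
                rw [hA3] at hL
                have hemp : (({u3} : Set V) \ {u3}) \ {u5} = ∅ := by simp
                rw [hemp, Set.ncard_empty] at hL
                omega
              · exact hflip23 (fun _ => lt_of_le_of_ne (by rw [← hc44]; exact hc.2 u4) hsat44)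
            · exact hflip23 (fun h => absurd h hc44)
          · exact hflipu2 (fun _ => lt_of_le_of_ne (by rw [← hc3v]; exact hc.2 u3) hsat3)
        · exact hflipu2 (fun h => absurd h hc3v)

/-- In a minimally non-(3,4)-colorable graph of girth at least 5, if
`u₁u₂u₃u₄u₅` is a 5-cycle with `u₁` of degree 2 and `u₂, u₃, u₄, u₅` of degree at
least 3, then either at most two of `u₂, u₃, u₄, u₅` are 5p-, 5s-, or 6p-vertices,
or some vertex of the cycle is a `7⁺`-vertex with at least three 3^+-neighbors or
a `9⁺`-vertex. -/
theorem stmt_18 {V : Type*} [Fintype V] (G : SimpleGraph V)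
    (hG : MinNonColorable34 G) (hgirth : GirthAtLeast5 G)
    (u1 u2 u3 u4 u5 : V)
    (hnd : ([u1, u2, u3, u4, u5] : List V).Nodup)
    (a12 : G.Adj u1 u2) (a23 : G.Adj u2 u3) (a34 : G.Adj u3 u4)
    (a45 : G.Adj u4 u5) (a51 : G.Adj u5 u1)
    (d1 : degN G u1 = 2)
    (d2 : 3 ≤ degN G u2) (d3 : 3 ≤ degN G u3) (d4 : 3 ≤ degN G u4)
    (d5 : 3 ≤ degN G u5) :
    {x ∈ ({u2, u3, u4, u5} : Set V) | Is5p G x ∨ Is5s G x ∨ Is6p G x}.ncard ≤ 2 ∨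
      ∃ x ∈ ({u1, u2, u3, u4, u5} : Set V),
        (7 ≤ degN G x ∧ 3 ≤ tpn G x) ∨ 9 ≤ degN G x := by
  classical
  obtain ⟨hNC, hDel, -⟩ := hG
  have htri := hgirth.1
  simp only [List.nodup_cons, List.mem_cons, List.mem_singleton, List.not_mem_nil,
    or_false, not_or, List.nodup_nil, and_true] at hnd
  obtain ⟨⟨n12, n13, n14, n15⟩, ⟨n23, n24, n25⟩, ⟨n34, n35⟩, n45, -⟩ := hnd
  by_contra hcon
  push_neg at hcon
  obtain ⟨hle2, hex⟩ := hcon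
  -- bounds from the absence of exceptional vertices
  have hbnd : ∀ x, x ∈ ({u1, u2, u3, u4, u5} : Set V) →
      degN G x ≤ 8 ∧ (7 ≤ degN G x → tpn G x ≤ 2) := by
    intro x hx
    have h := hex x hx
    obtain ⟨ha, hb⟩ := h
    exact ⟨by omega, fun h7 => by have := ha h7; omega⟩
  have hb3 := hbnd u3 (by simp)
  have hb4 := hbnd u4 (by simp)
  -- if all poor vertices among u2..u5 lie in a pair, the count is ≤ 2
  have hpair : ∀ a b : V,
      (∀ x, x ∈ ({u2, u3, u4, u5} : Set V) →
        (Is5p G x ∨ Is5s G x ∨ Is6p G x) → x = a ∨ x = b) → False := by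
    intro a b hcl
    have hsub : {x ∈ ({u2, u3, u4, u5} : Set V) | Is5p G x ∨ Is5s G x ∨ Is6p G x} ⊆
        ({a, b} : Set V) := by
      rintro x ⟨hm, hp⟩
      exact hcl x hm hp
    have hn : {x ∈ ({u2, u3, u4, u5} : Set V) | Is5p G x ∨ Is5s G x ∨ Is6p G x}.ncard ≤ 2 := by
      refine le_trans (Set.ncard_le_ncard hsub (Set.toFinite _)) ?_
      refine le_trans (Set.ncard_insert_le _ _) ?_
      rw [Set.ncard_singleton]
    omega
  have memq : ∀ {x : V} (hm : x ∈ ({u2, u3, u4, u5} : Set V)),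
      x = u2 ∨ x = u3 ∨ x = u4 ∨ x = u5 := by
    intro x hm
    simpa only [Set.mem_insert_iff, Set.mem_singleton_iff] using hm
  by_cases P3 : Is5p G u3 ∨ Is5s G u3 ∨ Is6p G u3
  · by_cases P2 : Is5p G u2 ∨ Is5s G u2 ∨ Is6p G u2
    · by_cases P4 : Is5p G u4 ∨ Is5s G u4 ∨ Is6p G u4
      · exact stmt18_key G hNC hDel htri u1 u2 u3 u4 u5 n12 n13 n14 n15 n23 n24 n25
          n34 n35 n45 a12 a23 a34 a45 a51 d1 d2 d3 d4 d5 P2 P3 (Or.inl P4)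
      · by_cases P5 : Is5p G u5 ∨ Is5s G u5 ∨ Is6p G u5
        · exact stmt18_key G hNC hDel htri u1 u2 u3 u4 u5 n12 n13 n14 n15 n23 n24 n25
            n34 n35 n45 a12 a23 a34 a45 a51 d1 d2 d3 d4 d5 P2 P3
            (Or.inr ⟨P5, hb4.1, hb4.2⟩)
        · refine hpair u2 u3 ?_
          intro x hm hp
          rcases memq hm with rfl | rfl | rfl | rfl
          · exact Or.inl rfl
          · exact Or.inr rfl
          · exact absurd hp P4
          · exact absurd hp P5
    · -- ¬P2 : need u3, u4, u5 poor; use the reflected configuration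
      by_cases P4 : Is5p G u4 ∨ Is5s G u4 ∨ Is6p G u4
      · by_cases P5 : Is5p G u5 ∨ Is5s G u5 ∨ Is6p G u5
        · exact stmt18_key G hNC hDel htri u1 u5 u4 u3 u2 n15 n14 n13 n12
            (Ne.symm n45) (Ne.symm n35) (Ne.symm n25) (Ne.symm n34) (Ne.symm n24)
            (Ne.symm n23) a51.symm a45.symm a34.symm a23.symm a12.symm
            d1 d5 d4 d3 d2 P5 P4 (Or.inl P3)
        · refine hpair u3 u4 ?_
          intro x hm hp
          rcases memq hm with rfl | rfl | rfl | rfl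
          · exact absurd hp P2
          · exact Or.inl rfl
          · exact Or.inr rfl
          · exact absurd hp P5
      · refine hpair u3 u5 ?_
        intro x hm hp
        rcases memq hm with rfl | rfl | rfl | rfl
        · exact absurd hp P2
        · exact Or.inl rfl
        · exact absurd hp P4
        · exact Or.inr rfl
  · -- ¬P3 : need u2, u4, u5 poor; reflected with u3 as the bounded vertex
    by_cases P2 : Is5p G u2 ∨ Is5s G u2 ∨ Is6p G u2
    · by_cases P4 : Is5p G u4 ∨ Is5s G u4 ∨ Is6p G u4
      · by_cases P5 : Is5p G u5 ∨ Is5s G u5 ∨ Is6p G u5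
        · exact stmt18_key G hNC hDel htri u1 u5 u4 u3 u2 n15 n14 n13 n12
            (Ne.symm n45) (Ne.symm n35) (Ne.symm n25) (Ne.symm n34) (Ne.symm n24)
            (Ne.symm n23) a51.symm a45.symm a34.symm a23.symm a12.symm
            d1 d5 d4 d3 d2 P5 P4 (Or.inr ⟨P2, hb3.1, hb3.2⟩)
        · refine hpair u2 u4 ?_
          intro x hm hp
          rcases memq hm with rfl | rfl | rfl | rfl
          · exact Or.inl rfl
          · exact absurd hp P3
          · exact Or.inr rfl
          · exact absurd hp P5
      · refine hpair u2 u5 ?_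
        intro x hm hp
        rcases memq hm with rfl | rfl | rfl | rfl
        · exact Or.inl rfl
        · exact absurd hp P3
        · exact absurd hp P4
        · exact Or.inr rfl
    · refine hpair u4 u5 ?_
      intro x hm hp
      rcases memq hm with rfl | rfl | rfl | rfl
      · exact absurd hp P2
      · exact absurd hp P3
      · exact Or.inl rfl
      · exact Or.inr rfl
end
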